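/- arXiv:1608.01700 — 15 statements merged into one kernel-verified Lean document; each statement's English description precedes it below -/
import Mathlib

section
/- Let F^O ⊆ 𝓛 be a finite set of pairs with |F^O| ≤ k, let 𝓓' := 𝓓 \ ∪_{(i,r)∈F^O} B(i,r) and k' := k − |F^O|. Let F ⊆ 𝓛 be a finite set of pairs such that |F| ≤ k' and |𝓓' \ ∪_{(i,r)∈F} B(i,r)| ≤ m. Suppose that for each i ∈ μ(F) a radius r'_i with r'_i ≤ max{r : (i,r) ∈ F} is given so that the set of pairs U := {(i, r'_i) : i ∈ μ(F)} is contained in 𝓛 and the pairs of U are pairwise non-intersecting. Then there exists a feasible LBkSRO-solution (S,σ) with cost(S,σ) ≤ cost(F) + Σ_{(i,r)∈F^O} 2r. -/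
open scoped Classical

/-- Auxiliary: summing nonnegative values over fibers of `g` indexed by any
finset `S` is at most the total sum. -/
theorem stmt_0_fiber_sum_le {α β : Type*} (S : Finset β) (A : Finset α) (g : α → β)
    (f : α → ℝ) (hf : ∀ p ∈ A, 0 ≤ f p) :
    ∑ i ∈ S, ∑ p ∈ A.filter (fun p => g p = i), f p ≤ ∑ p ∈ A, f p := by
  classical
  calc ∑ i ∈ S, ∑ p ∈ A.filter (fun p => g p = i), f p
      = ∑ i ∈ S, ∑ p ∈ A, if g p = i then f p else 0 := by
        refine Finset.sum_congr rfl fun i _ => ?_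
        rw [Finset.sum_filter]
    _ = ∑ p ∈ A, ∑ i ∈ S, if g p = i then f p else 0 := Finset.sum_comm
    _ ≤ ∑ p ∈ A, f p := by
        refine Finset.sum_le_sum fun p hp => ?_
        rw [Finset.sum_ite_eq]
        split
        · exact le_refl _
        · exact hf p hp

/-- Lemma 2.1 of the paper: translating a `k`-ball-selection solution `F`
(together with the guessed pairs `F^O` and non-intersecting witness radii `r'`)
into a feasible LBkSRO-solution of cost at most `cost(F) + Σ_{(i,r)∈F^O} 2r`.

Here `𝓕` are the facilities, `𝓓` the clients, `L` the lower bounds, `k` the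
bound on the number of open facilities and `m` the outlier bound.  A pair
`(i,r)` lies in `𝓛` iff `i ∈ 𝓕`, `r ≥ 0` and the ball `B(i,r)` of clients
within distance `r` of `i` contains at least `L i` clients.  An
LBkSRO-solution is given by `S ⊆ 𝓕` and `σ : 𝓓 → S ∪ {out}` (modelled by
`σ : X → Option X`), and its cost is `Σ_{i∈S} max_{j∈σ⁻¹(i)} c(i,j)`
(the max modelled by `sSup`, which is `0` on the empty set). -/
theorem stmt_0
    {X : Type*} [MetricSpace X]
    (𝓕 𝓓 : Finset X) (L : X → ℕ) (k m : ℕ)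
    (FO F : Finset (X × ℝ))
    -- F^O ⊆ 𝓛 and |F^O| ≤ k
    (hFO𝓛 : ∀ p ∈ FO, p.1 ∈ 𝓕 ∧ 0 ≤ p.2 ∧
      L p.1 ≤ (𝓓.filter fun j => dist p.1 j ≤ p.2).card)
    (hFOcard : FO.card ≤ k)
    -- F ⊆ 𝓛 and |F| ≤ k' = k − |F^O|
    (hF𝓛 : ∀ p ∈ F, p.1 ∈ 𝓕 ∧ 0 ≤ p.2 ∧
      L p.1 ≤ (𝓓.filter fun j => dist p.1 j ≤ p.2).card)
    (hFcard : F.card ≤ k - FO.card)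
    -- at most m clients of 𝓓' = 𝓓 \ ∪_{(i,r)∈F^O} B(i,r) are uncovered by F
    (houtliers :
      (((𝓓.filter fun j => ∀ p ∈ FO, ¬ dist p.1 j ≤ p.2)).filter
        fun j => ∀ p ∈ F, ¬ dist p.1 j ≤ p.2).card ≤ m)
    -- the witness radii r'_i ≤ max{r : (i,r) ∈ F}
    (r' : X → ℝ)
    (hr'le : ∀ i ∈ F.image Prod.fst, ∃ ρ, (i, ρ) ∈ F ∧ r' i ≤ ρ)
    -- U = {(i, r'_i) : i ∈ μ(F)} ⊆ 𝓛
    (hU𝓛 : ∀ i ∈ F.image Prod.fst, i ∈ 𝓕 ∧ 0 ≤ r' i ∧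
      L i ≤ (𝓓.filter fun j => dist i j ≤ r' i).card)
    -- the pairs of U are pairwise non-intersecting
    (hUnonint : ∀ i ∈ F.image Prod.fst, ∀ i' ∈ F.image Prod.fst, i ≠ i' →
      r' i + r' i' < dist i i') :
    ∃ (S : Finset X) (σ : X → Option X),
      S ⊆ 𝓕 ∧ S.card ≤ k ∧
      (∀ j ∈ 𝓓, ∀ i, σ j = some i → i ∈ S) ∧
      (∀ i ∈ S, L i ≤ (𝓓.filter fun j => σ j = some i).card) ∧
      (𝓓.filter fun j => σ j = none).card ≤ m ∧
      (∑ i ∈ S, sSup (((𝓓.filter fun j => σ j = some i).image fun j => dist i j : Finset ℝ) : Set ℝ))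
        ≤ (∑ p ∈ F, p.2) + ∑ p ∈ FO, 2 * p.2 := by
  classical
  set μF : Finset X := F.image Prod.fst with hμFdef
  have hFOnn : ∀ p ∈ FO, (0:ℝ) ≤ p.2 := fun p hp => (hFO𝓛 p hp).2.1
  have hFnn : ∀ p ∈ F, (0:ℝ) ≤ p.2 := fun p hp => (hF𝓛 p hp).2.1
  -- disjointness of the U-balls
  have hUdisj : ∀ i ∈ μF, ∀ i' ∈ μF, i ≠ i' → ∀ j : X,
      dist i j ≤ r' i → ¬ dist i' j ≤ r' i' := by
    intro i hi i' hi' hne j hj hj'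
    have h := hUnonint i hi i' hi' hne
    have h2 : dist i i' ≤ dist i j + dist j i' := dist_triangle _ _ _
    rw [dist_comm j i'] at h2
    linarith
  -- maximal subfamily T of FO with pairwise disjoint balls, disjoint from U-balls
  obtain ⟨T, hTmem, hTmax⟩ : ∃ T ∈
    (FO.powerset.filter (fun T : Finset (X × ℝ) =>
      (∀ q ∈ T, ∀ i ∈ μF, ∀ j ∈ 𝓓, dist q.1 j ≤ q.2 → ¬ dist i j ≤ r' i) ∧
      (∀ q ∈ T, ∀ q' ∈ T, q ≠ q' → ∀ j ∈ 𝓓, dist q.1 j ≤ q.2 → ¬ dist q'.1 j ≤ q'.2))),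
      ∀ x ∈ (FO.powerset.filter (fun T : Finset (X × ℝ) =>
      (∀ q ∈ T, ∀ i ∈ μF, ∀ j ∈ 𝓓, dist q.1 j ≤ q.2 → ¬ dist i j ≤ r' i) ∧
      (∀ q ∈ T, ∀ q' ∈ T, q ≠ q' → ∀ j ∈ 𝓓, dist q.1 j ≤ q.2 → ¬ dist q'.1 j ≤ q'.2))), ¬ T < x := by
    obtain ⟨T, hT⟩ := Finset.exists_maximal (s := (FO.powerset.filter (fun T : Finset (X × ℝ) =>
      (∀ q ∈ T, ∀ i ∈ μF, ∀ j ∈ 𝓓, dist q.1 j ≤ q.2 → ¬ dist i j ≤ r' i) ∧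
      (∀ q ∈ T, ∀ q' ∈ T, q ≠ q' → ∀ j ∈ 𝓓, dist q.1 j ≤ q.2 → ¬ dist q'.1 j ≤ q'.2))))
      ⟨∅, by simp⟩
    exact ⟨T, hT.1, fun x hx hlt => lt_irrefl _ (lt_of_lt_of_le hlt (hT.2 hx hlt.le))⟩
  rw [Finset.mem_filter, Finset.mem_powerset] at hTmem
  obtain ⟨hTsub, hTU, hTT⟩ := hTmem
  -- every nonempty FO-ball meets a U-ball or a T-ball
  have hcover : ∀ p ∈ FO, ∀ j₀ ∈ 𝓓, dist p.1 j₀ ≤ p.2 →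
      (∃ i ∈ μF, ∃ j ∈ 𝓓, dist p.1 j ≤ p.2 ∧ dist i j ≤ r' i) ∨
      (∃ q ∈ T, ∃ j ∈ 𝓓, dist p.1 j ≤ p.2 ∧ dist q.1 j ≤ q.2) := by
    intro p hp j₀ hj₀D hj₀
    by_contra hcon
    push_neg at hcon
    obtain ⟨h1, h2⟩ := hcon
    have hpT : p ∉ T := by
      intro hpT
      exact absurd hj₀ (not_le.mpr (h2 p hpT j₀ hj₀D hj₀))
    refine hTmax (insert p T) ?_ (Finset.ssubset_insert hpT)
    rw [Finset.mem_filter, Finset.mem_powerset]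
    refine ⟨Finset.insert_subset hp hTsub, ?_, ?_⟩
    · intro q hq i hi j hjD hdq
      rcases Finset.mem_insert.mp hq with rfl | hq
      · exact not_le.mpr (h1 i hi j hjD hdq)
      · exact hTU q hq i hi j hjD hdq
    · intro q hq q' hq' hne j hjD hdq
      rcases Finset.mem_insert.mp hq with he | hqT
      · rcases Finset.mem_insert.mp hq' with he' | hq'T
        · exact absurd (he.trans he'.symm) hne
        · rw [he] at hdq
          exact not_le.mpr (h2 q' hq'T j hjD hdq)
      · rcases Finset.mem_insert.mp hq' with he' | hq'T
        · intro hdq'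
          rw [he'] at hdq'
          exact absurd hdq (not_le.mpr (h2 q hqT j hjD hdq'))
        · exact hTT q hqT q' hq'T hne j hjD hdq
  -- the reassignment map t on pairs
  have hchoice : ∀ p : X × ℝ, ∃ i : X,
      (p ∈ FO → (∃ j ∈ 𝓓, dist p.1 j ≤ p.2) →
        ((i ∈ μF ∧ ∀ j ∈ 𝓓, dist p.1 j ≤ p.2 → dist i j ≤ r' i + 2 * p.2) ∨
         (∃ q ∈ T, i = q.1 ∧ (∃ j ∈ 𝓓, dist q.1 j ≤ q.2) ∧
           ∀ j ∈ 𝓓, dist p.1 j ≤ p.2 → dist q.1 j ≤ q.2 + 2 * p.2)))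
      ∧ (p ∈ T → i = p.1) := by
    intro p
    by_cases hp : p ∈ FO ∧ ∃ j ∈ 𝓓, dist p.1 j ≤ p.2
    · obtain ⟨hpFO, j₀, hj₀D, hj₀⟩ := hp
      have hpnn : (0:ℝ) ≤ p.2 := hFOnn p hpFO
      rcases hcover p hpFO j₀ hj₀D hj₀ with
        ⟨i, hiμ, j, hjD, hjp, hji⟩ | ⟨q, hqT, j, hjD, hjp, hjq⟩
      · refine ⟨i, fun _ _ => Or.inl ⟨hiμ, ?_⟩, fun hpT => absurd hji (hTU p hpT i hiμ j hjD hjp)⟩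
        intro j' hj'D hj'
        have t1 : dist i j' ≤ dist i p.1 + dist p.1 j' := dist_triangle _ _ _
        have t2 : dist i p.1 ≤ dist i j + dist j p.1 := dist_triangle _ _ _
        rw [dist_comm j p.1] at t2
        linarith
      · by_cases hpT : p ∈ T
        · refine ⟨p.1, fun _ _ => Or.inr ⟨p, hpT, rfl, ⟨j₀, hj₀D, hj₀⟩, ?_⟩, fun _ => rfl⟩
          intro j' hj'D hj'
          linarith
        · refine ⟨q.1, fun _ _ => Or.inr ⟨q, hqT, rfl, ⟨j, hjD, hjq⟩, ?_⟩,
            fun h => absurd h hpT⟩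
          intro j' hj'D hj'
          have t1 : dist q.1 j' ≤ dist q.1 p.1 + dist p.1 j' := dist_triangle _ _ _
          have t2 : dist q.1 p.1 ≤ dist q.1 j + dist j p.1 := dist_triangle _ _ _
          rw [dist_comm j p.1] at t2
          linarith
    · exact ⟨p.1, fun h1 h2 => absurd ⟨h1, h2⟩ hp, fun _ => rfl⟩
  choose t ht using hchoice
  -- the assignment σ
  have hσc : ∀ j : X, ∃ o : Option X, j ∈ 𝓓 →
      ((∃ i ∈ μF, o = some i ∧ dist i j ≤ r' i) ∨
       (∃ q ∈ T, o = some q.1 ∧ dist q.1 j ≤ q.2 ∧ (∀ i ∈ μF, ¬ dist i j ≤ r' i)) ∨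
       (∃ p ∈ FO, o = some (t p) ∧ dist p.1 j ≤ p.2 ∧
         (∀ q ∈ T, ¬ dist q.1 j ≤ q.2) ∧ (∀ i ∈ μF, ¬ dist i j ≤ r' i)) ∨
       (∃ p ∈ F, o = some p.1 ∧ dist p.1 j ≤ p.2 ∧
         (∀ p' ∈ FO, ¬ dist p'.1 j ≤ p'.2) ∧ (∀ i ∈ μF, ¬ dist i j ≤ r' i)) ∨
       (o = none ∧ (∀ p ∈ FO, ¬ dist p.1 j ≤ p.2) ∧ (∀ p ∈ F, ¬ dist p.1 j ≤ p.2))) := by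
    intro j
    by_cases h1 : ∃ i ∈ μF, dist i j ≤ r' i
    · obtain ⟨i, hi, hd⟩ := h1
      exact ⟨some i, fun _ => Or.inl ⟨i, hi, rfl, hd⟩⟩
    push_neg at h1
    have h1' : ∀ i ∈ μF, ¬ dist i j ≤ r' i := fun i hi => not_le.mpr (h1 i hi)
    by_cases h2 : ∃ q ∈ T, dist q.1 j ≤ q.2
    · obtain ⟨q, hq, hd⟩ := h2
      exact ⟨some q.1, fun _ => Or.inr (Or.inl ⟨q, hq, rfl, hd, h1'⟩)⟩
    push_neg at h2
    have h2' : ∀ q ∈ T, ¬ dist q.1 j ≤ q.2 := fun q hq => not_le.mpr (h2 q hq)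
    by_cases h3 : ∃ p ∈ FO, dist p.1 j ≤ p.2
    · obtain ⟨p, hp, hd⟩ := h3
      exact ⟨some (t p), fun _ => Or.inr (Or.inr (Or.inl ⟨p, hp, rfl, hd, h2', h1'⟩))⟩
    push_neg at h3
    have h3' : ∀ p ∈ FO, ¬ dist p.1 j ≤ p.2 := fun p hp => not_le.mpr (h3 p hp)
    by_cases h4 : ∃ p ∈ F, dist p.1 j ≤ p.2
    · obtain ⟨p, hp, hd⟩ := h4
      exact ⟨some p.1, fun _ => Or.inr (Or.inr (Or.inr (Or.inl ⟨p, hp, rfl, hd, h3', h1'⟩)))⟩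
    push_neg at h4
    have h4' : ∀ p ∈ F, ¬ dist p.1 j ≤ p.2 := fun p hp => not_le.mpr (h4 p hp)
    exact ⟨none, fun _ => Or.inr (Or.inr (Or.inr (Or.inr ⟨rfl, h3', h4'⟩)))⟩
  choose σ hσ using hσc
  refine ⟨μF ∪ T.image Prod.fst, σ, ?_, ?_, ?_, ?_, ?_, ?_⟩
  -- S ⊆ 𝓕
  · intro i hi
    rcases Finset.mem_union.mp hi with hi | hi
    · obtain ⟨p, hp, rfl⟩ := Finset.mem_image.mp hi
      exact (hF𝓛 p hp).1
    · obtain ⟨q, hq, rfl⟩ := Finset.mem_image.mp hi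
      exact (hFO𝓛 q (hTsub hq)).1
  -- card ≤ k
  · have h1 := Finset.card_union_le μF (T.image Prod.fst)
    have h2 : μF.card ≤ F.card := Finset.card_image_le
    have h3 : (T.image Prod.fst).card ≤ T.card := Finset.card_image_le
    have h4 : T.card ≤ FO.card := Finset.card_le_card hTsub
    omega
  -- σ maps into S
  · intro j hjD i hji
    rcases hσ j hjD with ⟨i', hi', ho, _⟩ | ⟨q, hq, ho, _, _⟩ |
      ⟨p, hp, ho, hdp, _, _⟩ | ⟨p, hp, ho, _, _, _⟩ | ⟨ho, _, _⟩
    · have e : i' = i := Option.some_inj.mp (ho.symm.trans hji)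
      exact Finset.mem_union_left _ (e ▸ hi')
    · have e : q.1 = i := Option.some_inj.mp (ho.symm.trans hji)
      exact Finset.mem_union_right _ (e ▸ Finset.mem_image.mpr ⟨q, hq, rfl⟩)
    · have e : t p = i := Option.some_inj.mp (ho.symm.trans hji)
      rcases (ht p).1 hp ⟨j, hjD, hdp⟩ with ⟨hiμ, _⟩ | ⟨q, hq, heq, _, _⟩
      · exact Finset.mem_union_left _ (e ▸ hiμ)
      · have e2 : q.1 = i := heq.symm.trans e
        exact Finset.mem_union_right _ (e2 ▸ Finset.mem_image.mpr ⟨q, hq, rfl⟩)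
    · have e : p.1 = i := Option.some_inj.mp (ho.symm.trans hji)
      exact Finset.mem_union_left _ (e ▸ Finset.mem_image.mpr ⟨p, hp, rfl⟩)
    · rw [ho] at hji; exact absurd hji (by simp)
  -- lower bounds
  · have hUassign : ∀ i ∈ μF, ∀ j ∈ 𝓓, dist i j ≤ r' i → σ j = some i := by
      intro i hi j hjD hd
      rcases hσ j hjD with ⟨i', hi', ho, hd'⟩ | ⟨q, hq, ho, hd', hnU⟩ |
        ⟨p, hp, ho, hdp, hnT, hnU⟩ | ⟨p, hp, ho, hdp, hnFO, hnU⟩ | ⟨ho, hnFO, hnF⟩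
      · have : i' = i := by
          by_contra hne
          exact hUdisj i hi i' hi' (Ne.symm hne) j hd hd'
        rw [ho, this]
      · exact absurd hd (hnU i hi)
      · exact absurd hd (hnU i hi)
      · exact absurd hd (hnU i hi)
      · obtain ⟨ρ, hρF, hρ⟩ := hr'le i hi
        exact absurd (le_trans hd hρ) (hnF (i, ρ) hρF)
    have hTassign : ∀ q ∈ T, ∀ j ∈ 𝓓, dist q.1 j ≤ q.2 → σ j = some q.1 := by
      intro q hq j hjD hd
      rcases hσ j hjD with ⟨i', hi', ho, hd'⟩ | ⟨q', hq', ho, hd', hnU⟩ |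
        ⟨p, hp, ho, hdp, hnT, hnU⟩ | ⟨p, hp, ho, hdp, hnFO, hnU⟩ | ⟨ho, hnFO, hnF⟩
      · exact absurd hd' (hTU q hq i' hi' j hjD hd)
      · have : q' = q := by
          by_contra hne
          exact hTT q hq q' hq' (Ne.symm hne) j hjD hd hd'
        rw [ho, this]
      · exact absurd hd (hnT q hq)
      · exact absurd hd (hnFO q (hTsub hq))
      · exact absurd hd (hnFO q (hTsub hq))
    intro i hi
    rcases Finset.mem_union.mp hi with hi | hi
    · refine le_trans (hU𝓛 i hi).2.2 (Finset.card_le_card ?_)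
      intro j hj
      rw [Finset.mem_filter] at hj ⊢
      exact ⟨hj.1, hUassign i hi j hj.1 hj.2⟩
    · obtain ⟨q, hq, rfl⟩ := Finset.mem_image.mp hi
      refine le_trans (hFO𝓛 q (hTsub hq)).2.2 (Finset.card_le_card ?_)
      intro j hj
      rw [Finset.mem_filter] at hj ⊢
      exact ⟨hj.1, hTassign q hq j hj.1 hj.2⟩
  -- outliers
  · refine le_trans (Finset.card_le_card ?_) houtliers
    intro j hj
    rw [Finset.mem_filter] at hj
    obtain ⟨hjD, hnone⟩ := hj
    rcases hσ j hjD with ⟨_, _, ho, _⟩ | ⟨_, _, ho, _, _⟩ |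
      ⟨_, _, ho, _, _, _⟩ | ⟨_, _, ho, _, _, _⟩ | ⟨ho, hnFO, hnF⟩
    · rw [ho] at hnone; exact absurd hnone (by simp)
    · rw [ho] at hnone; exact absurd hnone (by simp)
    · rw [ho] at hnone; exact absurd hnone (by simp)
    · rw [ho] at hnone; exact absurd hnone (by simp)
    · exact Finset.mem_filter.mpr ⟨Finset.mem_filter.mpr ⟨hjD, hnFO⟩, hnF⟩
  -- cost bound
  · set ρm : X → ℝ := fun i =>
      if h : (F.filter fun p => p.1 = i).Nonempty
      then (F.filter fun p => p.1 = i).sup' h Prod.snd else 0 with hρmdef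
    have hρm1 : ∀ p ∈ F, p.2 ≤ ρm p.1 := by
      intro p hp
      have hmem : p ∈ F.filter (fun q : X × ℝ => q.1 = p.1) :=
        Finset.mem_filter.mpr ⟨hp, rfl⟩
      have hne : (F.filter fun q : X × ℝ => q.1 = p.1).Nonempty := ⟨p, hmem⟩
      rw [hρmdef]
      simp only [dif_pos hne]
      exact Finset.le_sup' Prod.snd hmem
    have hρm0 : ∀ i ∈ μF, (0:ℝ) ≤ ρm i := by
      intro i hi
      obtain ⟨p, hp, rfl⟩ := Finset.mem_image.mp hi
      exact le_trans (hFnn p hp) (hρm1 p hp)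
    have hρmr' : ∀ i ∈ μF, r' i ≤ ρm i := by
      intro i hi
      obtain ⟨ρ, hρF, hρ⟩ := hr'le i hi
      exact le_trans hρ (hρm1 (i, ρ) hρF)
    have hρm2 : ∀ i ∈ μF, ρm i ≤ ∑ p ∈ F.filter (fun p => p.1 = i), p.2 := by
      intro i hi
      obtain ⟨p₀, hp₀, rfl⟩ := Finset.mem_image.mp hi
      have hne : (F.filter fun q : X × ℝ => q.1 = p₀.1).Nonempty :=
        ⟨p₀, Finset.mem_filter.mpr ⟨hp₀, rfl⟩⟩
      rw [hρmdef]
      simp only [dif_pos hne]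
      refine Finset.sup'_le hne Prod.snd ?_
      intro q hq
      exact Finset.single_le_sum
        (fun r hr => hFnn r (Finset.mem_filter.mp hr).1) hq
    have hbnd : ∀ i ∈ μF ∪ T.image Prod.fst,
        sSup (((𝓓.filter fun j => σ j = some i).image fun j => dist i j : Finset ℝ) : Set ℝ)
          ≤ (if i ∈ μF then ρm i else 0) + ∑ p ∈ FO.filter (fun p => t p = i), 2 * p.2 := by
      intro i hiS
      have hsum0 : (0:ℝ) ≤ ∑ p ∈ FO.filter (fun p => t p = i), 2 * p.2 :=
        Finset.sum_nonneg fun p hp => by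
          have := hFOnn p (Finset.mem_filter.mp hp).1; linarith
      have hif0 : (0:ℝ) ≤ if i ∈ μF then ρm i else 0 := by
        split
        · exact hρm0 i ‹_›
        · exact le_refl 0
      refine Real.sSup_le ?_ (by linarith)
      intro x hx
      rw [Finset.mem_coe, Finset.mem_image] at hx
      obtain ⟨j, hj, rfl⟩ := hx
      rw [Finset.mem_filter] at hj
      obtain ⟨hjD, hji⟩ := hj
      rcases hσ j hjD with ⟨i', hi', ho, hd⟩ | ⟨q, hq, ho, hd, _⟩ |
        ⟨p, hp, ho, hdp, hnT, _⟩ | ⟨p, hp, ho, hdp, _, _⟩ | ⟨ho, _, _⟩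
      · have e : i' = i := Option.some_inj.mp (ho.symm.trans hji)
        rw [e] at hi' hd
        rw [if_pos hi']
        have := hρmr' i hi'
        linarith
      · have e : q.1 = i := Option.some_inj.mp (ho.symm.trans hji)
        have htq : t q = q.1 := (ht q).2 hq
        have hqfil : q ∈ FO.filter (fun p => t p = i) :=
          Finset.mem_filter.mpr ⟨hTsub hq, htq.trans e⟩
        have hqnn := hFOnn q (hTsub hq)
        have hle : 2 * q.2 ≤ ∑ p ∈ FO.filter (fun p => t p = i), 2 * p.2 :=
          Finset.single_le_sum
            (fun p hp => by have := hFOnn p (Finset.mem_filter.mp hp).1; show (0:ℝ) ≤ 2 * p.2; linarith) hqfil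
        rw [e] at hd
        linarith
      · have e : t p = i := Option.some_inj.mp (ho.symm.trans hji)
        have hpnn := hFOnn p hp
        have hpfil : p ∈ FO.filter (fun p' => t p' = i) :=
          Finset.mem_filter.mpr ⟨hp, e⟩
        rcases (ht p).1 hp ⟨j, hjD, hdp⟩ with ⟨hiμ, hb⟩ | ⟨q, hq, heq, hqball, hb⟩
        · have hd := hb j hjD hdp
          rw [e] at hiμ hd
          have hle : 2 * p.2 ≤ ∑ p' ∈ FO.filter (fun p' => t p' = i), 2 * p'.2 :=
            Finset.single_le_sum
              (fun p' hp' => by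
                have := hFOnn p' (Finset.mem_filter.mp hp').1
                show (0:ℝ) ≤ 2 * p'.2; linarith)
              hpfil
          rw [if_pos hiμ]
          have := hρmr' i hiμ
          linarith
        · have hd := hb j hjD hdp
          have e2 : q.1 = i := heq.symm.trans e
          rw [e2] at hd
          have htq : t q = q.1 := (ht q).2 hq
          have hqnn := hFOnn q (hTsub hq)
          have hpq : p ≠ q := by
            rintro rfl
            exact hnT p hq hdp
          have hsubset : ({p, q} : Finset (X × ℝ)) ⊆ FO.filter (fun p' => t p' = i) := by
            intro x hx
            rcases Finset.mem_insert.mp hx with rfl | hx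
            · exact hpfil
            · rw [Finset.mem_singleton] at hx
              subst hx
              exact Finset.mem_filter.mpr ⟨hTsub hq, htq.trans e2⟩
          have hle : 2 * p.2 + 2 * q.2 ≤ ∑ p' ∈ FO.filter (fun p' => t p' = i), 2 * p'.2 := by
            rw [← Finset.sum_pair (f := fun p' : X × ℝ => 2 * p'.2) hpq]
            refine Finset.sum_le_sum_of_subset_of_nonneg hsubset ?_
            intro p' hp' _
            have := hFOnn p' (Finset.mem_filter.mp hp').1
            show (0:ℝ) ≤ 2 * p'.2; linarith
          linarith
      · have e : p.1 = i := Option.some_inj.mp (ho.symm.trans hji)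
        have hiμ : i ∈ μF := e ▸ Finset.mem_image.mpr ⟨p, hp, rfl⟩
        have hd : dist i j ≤ p.2 := e ▸ hdp
        have hρ : p.2 ≤ ρm i := e ▸ hρm1 p hp
        rw [if_pos hiμ]
        linarith
      · rw [hji] at ho; exact absurd ho (by simp)
    calc ∑ i ∈ μF ∪ T.image Prod.fst,
          sSup (((𝓓.filter fun j => σ j = some i).image fun j => dist i j : Finset ℝ) : Set ℝ)
        ≤ ∑ i ∈ μF ∪ T.image Prod.fst,
            ((if i ∈ μF then ρm i else 0) + ∑ p ∈ FO.filter (fun p => t p = i), 2 * p.2) :=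
          Finset.sum_le_sum hbnd
      _ = (∑ i ∈ μF ∪ T.image Prod.fst, if i ∈ μF then ρm i else 0) +
          ∑ i ∈ μF ∪ T.image Prod.fst, ∑ p ∈ FO.filter (fun p => t p = i), 2 * p.2 :=
          Finset.sum_add_distrib
      _ ≤ (∑ p ∈ F, p.2) + ∑ p ∈ FO, 2 * p.2 := by
          refine add_le_add ?_ ?_
          · have h1 : ∑ i ∈ μF ∪ T.image Prod.fst, (if i ∈ μF then ρm i else 0) =
                ∑ i ∈ (μF ∪ T.image Prod.fst).filter (fun i => i ∈ μF), ρm i :=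
              (Finset.sum_filter _ _).symm
            rw [h1]
            have h2 : (μF ∪ T.image Prod.fst).filter (fun i => i ∈ μF) ⊆ μF :=
              fun i hi => (Finset.mem_filter.mp hi).2
            calc ∑ i ∈ (μF ∪ T.image Prod.fst).filter (fun i => i ∈ μF), ρm i
                ≤ ∑ i ∈ μF, ρm i :=
                  Finset.sum_le_sum_of_subset_of_nonneg h2 (fun i hi _ => hρm0 i hi)
              _ ≤ ∑ i ∈ μF, ∑ p ∈ F.filter (fun p => p.1 = i), p.2 :=
                  Finset.sum_le_sum hρm2
              _ ≤ ∑ p ∈ F, p.2 := stmt_0_fiber_sum_le μF F Prod.fst _ hFnn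
          · exact stmt_0_fiber_sum_le (μF ∪ T.image Prod.fst) FO t
              (fun p => 2 * p.2) (fun p hp => by show (0:ℝ) ≤ 2 * p.2; linarith [hFOnn p hp])
end

section
/- Let n ≥ 1 be a natural number, let OPT, ε, C₁, C₂, z₁, z₂, a, b, k₁, k₂, k' be nonnegative reals with k₁ ≤ n, a + b = 1, a·k₁ + b·k₂ = k', 0 ≤ z₂ − z₁ ≤ ε·OPT/(3n), C₁ + 3k₁·z₁ ≤ 3(OPT + k'·z₁), and C₂ + 3k₂·z₂ ≤ 3(OPT + k'·z₂). Then a·C₁ + b·C₂ ≤ (3 + ε)·OPT. -/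
/-- Claim 2.4 of the paper: the convex combination of the costs of the two
primal-dual solutions obtained via binary search is at most `(3+ε)·OPT`. -/
theorem stmt_1 (n : ℕ) (hn : 1 ≤ n)
    (OPT ε C₁ C₂ z₁ z₂ a b k₁ k₂ k' : ℝ)
    (hOPT : 0 ≤ OPT) (hε : 0 ≤ ε) (hC₁ : 0 ≤ C₁) (hC₂ : 0 ≤ C₂)
    (hz₁ : 0 ≤ z₁) (hz₂ : 0 ≤ z₂) (ha : 0 ≤ a) (hb : 0 ≤ b)
    (hk₁ : 0 ≤ k₁) (hk₂ : 0 ≤ k₂) (hk' : 0 ≤ k')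
    (hk₁n : k₁ ≤ (n : ℝ)) (hab : a + b = 1) (habk : a * k₁ + b * k₂ = k')
    (hz : 0 ≤ z₂ - z₁) (hδ : z₂ - z₁ ≤ ε * OPT / (3 * n))
    (h1 : C₁ + 3 * k₁ * z₁ ≤ 3 * (OPT + k' * z₁))
    (h2 : C₂ + 3 * k₂ * z₂ ≤ 3 * (OPT + k' * z₂)) :
    a * C₁ + b * C₂ ≤ (3 + ε) * OPT := by
  have hn' : (1:ℝ) ≤ n := by exact_mod_cast hn
  have h3n : (0:ℝ) < 3 * n := by positivity
  have hδ' : (z₂ - z₁) * (3 * n) ≤ ε * OPT := (le_div_iff₀ h3n).mp hδ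
  have ha1 : a ≤ 1 := by linarith
  have hb1 : b ≤ 1 := by linarith
  have key : a * C₁ + b * C₂ ≤ 3 * OPT + 3 * (a * b) * ((k₁ - k₂) * (z₂ - z₁)) := by
    have hb' : b = 1 - a := by linarith
    subst hb'
    rw [← habk] at h1 h2
    nlinarith [mul_le_mul_of_nonneg_left h1 ha, mul_le_mul_of_nonneg_left h2 hb, habk]
  have hfin : 3 * (a * b) * ((k₁ - k₂) * (z₂ - z₁)) ≤ ε * OPT := by
    rcases le_or_gt k₁ k₂ with h | h
    · nlinarith [mul_nonneg (mul_nonneg ha hb) hz]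
    · have hm : a * b * (k₁ - k₂) ≤ (n : ℝ) := by
        nlinarith [mul_nonneg ha hb, mul_le_one₀ ha1 hb hb1]
      nlinarith [mul_le_mul_of_nonneg_right hm hz]
  linarith
end

section
/- Let C₁, C₂ ≥ 0 be reals and a, b ≥ 0 with a + b = 1. Then: (i) if b ≥ 1/3, min{C₂, 2b·C₂ + (1+b)·C₁} ≤ ((b+1)/(3b² − 2b + 1))·(a·C₁ + b·C₂); and (ii) for all b ∈ [0,1], min{C₂, 2b·C₂ + (1+b)·C₁} ≤ (1 + 3/(2√2))·(a·C₁ + b·C₂) ≤ 2.0607·(a·C₁ + b·C₂). -/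
/-- Claim 2.5 of the paper: the key numerical inequality bounding the better of
the two candidate solutions produced in the combination step. -/
theorem stmt_2 (C₁ C₂ a b : ℝ) (hC₁ : 0 ≤ C₁) (hC₂ : 0 ≤ C₂)
    (ha : 0 ≤ a) (hb : 0 ≤ b) (hab : a + b = 1) :
    ((1 / 3 : ℝ) ≤ b →
      min C₂ (2 * b * C₂ + (1 + b) * C₁) ≤
        ((b + 1) / (3 * b ^ 2 - 2 * b + 1)) * (a * C₁ + b * C₂)) ∧
    min C₂ (2 * b * C₂ + (1 + b) * C₁) ≤
      (1 + 3 / (2 * Real.sqrt 2)) * (a * C₁ + b * C₂) ∧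
    (1 + 3 / (2 * Real.sqrt 2)) * (a * C₁ + b * C₂) ≤
      2.0607 * (a * C₁ + b * C₂) := by
  have hs : Real.sqrt 2 ^ 2 = 2 := Real.sq_sqrt (by norm_num)
  have hs0 : (0:ℝ) < Real.sqrt 2 := Real.sqrt_pos.mpr (by norm_num)
  set s := Real.sqrt 2 with hsdef
  have hslb : (1.4142:ℝ) ≤ s := by nlinarith
  have hsub : s ≤ 1.41422 := by nlinarith
  have ha' : a = 1 - b := by linarith
  subst ha'
  have hb1 : b ≤ 1 := by linarith
  have hD : (0:ℝ) < 3 * b ^ 2 - 2 * b + 1 := by nlinarith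
  have h1 : min C₂ (2 * b * C₂ + (1 + b) * C₁) ≤ C₂ := min_le_left _ _
  have h2 : min C₂ (2 * b * C₂ + (1 + b) * C₁) ≤ 2 * b * C₂ + (1 + b) * C₁ :=
    min_le_right _ _
  have hX : (0:ℝ) ≤ (1 - b) * C₁ + b * C₂ :=
    add_nonneg (mul_nonneg (by linarith) hC₁) (mul_nonneg hb hC₂)
  have part1 : (1 / 3 : ℝ) ≤ b →
      min C₂ (2 * b * C₂ + (1 + b) * C₁) ≤
        ((b + 1) / (3 * b ^ 2 - 2 * b + 1)) * ((1 - b) * C₁ + b * C₂) := by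
    intro h13
    rw [div_mul_eq_mul_div, le_div_iff₀ hD]
    nlinarith [mul_le_mul_of_nonneg_left h1 (show (0:ℝ) ≤ 3 * b ^ 2 - b by nlinarith),
      mul_le_mul_of_nonneg_left h2 (show (0:ℝ) ≤ 1 - b by linarith)]
  have hK : (1 + 3 / (2 * s)) = (2 * s + 3) / (2 * s) := by
    field_simp
  refine ⟨part1, ?_, ?_⟩
  · rw [hK]
    rw [div_mul_eq_mul_div, le_div_iff₀ (by linarith : (0:ℝ) < 2 * s)]
    by_cases h13 : (1 / 3 : ℝ) ≤ b
    · have h := part1 h13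
      have hfrac : (b + 1) / (3 * b ^ 2 - 2 * b + 1) * (2 * s) ≤ 2 * s + 3 := by
        rw [div_mul_eq_mul_div, div_le_iff₀ hD]
        nlinarith [sq_nonneg (b - (s - 1))]
      calc min C₂ (2 * b * C₂ + (1 + b) * C₁) * (2 * s)
          ≤ ((b + 1) / (3 * b ^ 2 - 2 * b + 1) * ((1 - b) * C₁ + b * C₂)) * (2 * s) := by
            apply mul_le_mul_of_nonneg_right h (by linarith)
        _ ≤ (2 * s + 3) * ((1 - b) * C₁ + b * C₂) := by
            have := mul_le_mul_of_nonneg_right hfrac hX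
            nlinarith [this]
    · push_neg at h13
      have hb3 : b ≤ 1 / 3 := le_of_lt h13
      calc min C₂ (2 * b * C₂ + (1 + b) * C₁) * (2 * s)
          ≤ (2 * b * C₂ + (1 + b) * C₁) * (2 * s) :=
            mul_le_mul_of_nonneg_right h2 (by linarith)
        _ ≤ (2 * s + 3) * ((1 - b) * C₁ + b * C₂) := by
            nlinarith [mul_nonneg hC₂ hb, mul_nonneg hC₁ (mul_nonneg hb (show (0:ℝ) ≤ s by linarith)),
              mul_nonneg hC₁ hb, mul_nonneg (mul_nonneg hC₂ hb) (show (0:ℝ) ≤ s - 1 by linarith),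
              mul_nonneg hC₁ (show (0:ℝ) ≤ 1/3 - b by linarith),
              mul_nonneg (mul_nonneg hC₁ (show (0:ℝ) ≤ 1/3 - b by linarith)) (show (0:ℝ) ≤ s by linarith)]
  · apply mul_le_mul_of_nonneg_right _ hX
    rw [hK, div_le_iff₀ (by linarith : (0:ℝ) < 2 * s)]
    nlinarith
end

section
/- Let C₁, C₂ ≥ 0 be reals and a, b ≥ 0 with a + b = 1. Then min{3C₂, 2b·C₂ + (3+b)·C₁} ≤ (3(b+3)/(3b² − 2b + 3))·(a·C₁ + b·C₂) ≤ (3/8)(5 + 3√3)·(a·C₁ + b·C₂) ≤ 3.83·(a·C₁ + b·C₂). -/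
/-- Claim B.2 of the paper: the numerical inequality behind the improved
3.83-approximation for lower-bounded min-sum-of-radii. -/
theorem stmt_3 (C₁ C₂ a b : ℝ) (hC₁ : 0 ≤ C₁) (hC₂ : 0 ≤ C₂)
    (ha : 0 ≤ a) (hb : 0 ≤ b) (hab : a + b = 1) :
    min (3 * C₂) (2 * b * C₂ + (3 + b) * C₁) ≤
      (3 * (b + 3) / (3 * b ^ 2 - 2 * b + 3)) * (a * C₁ + b * C₂) ∧
    (3 * (b + 3) / (3 * b ^ 2 - 2 * b + 3)) * (a * C₁ + b * C₂) ≤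
      (3 / 8) * (5 + 3 * Real.sqrt 3) * (a * C₁ + b * C₂) ∧
    (3 / 8) * (5 + 3 * Real.sqrt 3) * (a * C₁ + b * C₂) ≤
      3.83 * (a * C₁ + b * C₂) := by
  have hb1 : b ≤ 1 := by linarith
  have hD : 0 < 3 * b ^ 2 - 2 * b + 3 := by nlinarith [sq_nonneg (b - 1)]
  have hsum : 0 ≤ a * C₁ + b * C₂ := by positivity
  have hs : Real.sqrt 3 ^ 2 = 3 := Real.sq_sqrt (by norm_num)
  have hs1 : (1.7 : ℝ) ≤ Real.sqrt 3 := by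
    nlinarith [Real.sqrt_nonneg 3, hs]
  have hs2 : Real.sqrt 3 ≤ 1.7321 := by
    nlinarith [Real.sqrt_nonneg 3, hs]
  refine ⟨?_, ?_, ?_⟩
  · -- min ≤ convex combination
    set m := min (3 * C₂) (2 * b * C₂ + (3 + b) * C₁) with hm
    have h1 : m ≤ 3 * C₂ := min_le_left _ _
    have h2 : m ≤ 2 * b * C₂ + (3 + b) * C₁ := min_le_right _ _
    have hl1 : 0 ≤ 3 * b ^ 2 + b := by positivity
    have hl2 : 0 ≤ 3 * (1 - b) := by linarith
    rw [div_mul_eq_mul_div, le_div_iff₀ hD]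
    have key : (3 * b ^ 2 + b) * (3 * C₂) + (3 * (1 - b)) * (2 * b * C₂ + (3 + b) * C₁)
        = 3 * (b + 3) * (a * C₁ + b * C₂) := by
      have : a = 1 - b := by linarith
      rw [this]; ring
    nlinarith [mul_le_mul_of_nonneg_left h1 hl1, mul_le_mul_of_nonneg_left h2 hl2]
  · apply mul_le_mul_of_nonneg_right _ hsum
    rw [div_le_iff₀ hD]
    nlinarith [sq_nonneg (b - (2 * Real.sqrt 3 - 3)), Real.sqrt_nonneg 3]
  · apply mul_le_mul_of_nonneg_right _ hsum
    nlinarith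
end

section
/- Let n ≥ 1 be a natural number, let OPT, ε, R*, C₁, C₂, z₁, z₂, a, b, k₁, k₂, k' be nonnegative reals with 1 ≤ k₁ ≤ n, a + b = 1, a·k₁ + b·k₂ = k', 0 ≤ z₂ − z₁ ≤ ε·OPT/(3n·2ⁿ), C₁ + 3(k₁ − 1)·z₁ ≤ 3(OPT + k'·z₁) + 4R*, and C₂ + 3(k₂ − 1)·z₂ ≤ 3(OPT + k'·z₂) + 4R*. Then a·C₁ + b·C₂ ≤ (3 + ε)·OPT + 4R* + 3z₁. -/
/-- Part (i) of Lemma 2.6 of the paper: the convex-combination bound in the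
outlier setting, with the extra additive terms `4R*` and `3z₁`. -/
theorem stmt_4 (n : ℕ) (hn : 1 ≤ n)
    (OPT ε Rstar C₁ C₂ z₁ z₂ a b k₁ k₂ k' : ℝ)
    (hOPT : 0 ≤ OPT) (hε : 0 ≤ ε) (hR : 0 ≤ Rstar) (hC₁ : 0 ≤ C₁) (hC₂ : 0 ≤ C₂)
    (hz₁ : 0 ≤ z₁) (hz₂ : 0 ≤ z₂) (ha : 0 ≤ a) (hb : 0 ≤ b)
    (hk₂ : 0 ≤ k₂) (hk' : 0 ≤ k')
    (hk₁1 : 1 ≤ k₁) (hk₁n : k₁ ≤ (n : ℝ)) (hab : a + b = 1)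
    (habk : a * k₁ + b * k₂ = k')
    (hz : 0 ≤ z₂ - z₁) (hδ : z₂ - z₁ ≤ ε * OPT / (3 * n * 2 ^ n))
    (h1 : C₁ + 3 * (k₁ - 1) * z₁ ≤ 3 * (OPT + k' * z₁) + 4 * Rstar)
    (h2 : C₂ + 3 * (k₂ - 1) * z₂ ≤ 3 * (OPT + k' * z₂) + 4 * Rstar) :
    a * C₁ + b * C₂ ≤ (3 + ε) * OPT + 4 * Rstar + 3 * z₁ := by
  have hn1 : (1 : ℝ) ≤ (n : ℝ) := by exact_mod_cast hn
  have h2n : (2 : ℝ) ≤ 2 ^ n := by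
    calc (2 : ℝ) = 2 ^ 1 := by norm_num
    _ ≤ 2 ^ n := by exact pow_le_pow_right₀ (by norm_num) hn
  have hpos : (0 : ℝ) < 3 * n * 2 ^ n := by positivity
  have hδ' : (z₂ - z₁) * (3 * (n : ℝ) * 2 ^ n) ≤ ε * OPT := by
    rw [le_div_iff₀ hpos] at hδ; exact hδ
  subst habk
  have hb' : b = 1 - a := by linarith
  subst hb'
  -- key convex combination
  have key : a * C₁ + (1 - a) * C₂ ≤ 3 * OPT + 4 * Rstar + 3 * z₁
      + 3 * ((a * (1 - a) * (k₁ - k₂) + (1 - a)) * (z₂ - z₁)) := by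
    nlinarith [mul_le_mul_of_nonneg_left h1 ha, mul_le_mul_of_nonneg_left h2 hb]
  have hab4 : 4 * (a * (1 - a)) ≤ 1 := by nlinarith [sq_nonneg (a - (1 - a))]
  have habnn : 0 ≤ a * (1 - a) := mul_nonneg ha hb
  have habk₁ : a * (1 - a) * (k₁ - k₂) + (1 - a) ≤ (n : ℝ) * 2 ^ n := by
    have h1' : a * (1 - a) * (k₁ - k₂) ≤ a * (1 - a) * k₁ :=
      mul_le_mul_of_nonneg_left (by linarith) habnn
    have h2' : 4 * (a * (1 - a)) * k₁ ≤ 1 * k₁ :=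
      mul_le_mul_of_nonneg_right hab4 (by linarith)
    have h3' : (n : ℝ) * 2 ≤ (n : ℝ) * 2 ^ n :=
      mul_le_mul_of_nonneg_left h2n (by linarith)
    nlinarith
  have hfin : (a * (1 - a) * (k₁ - k₂) + (1 - a)) * (z₂ - z₁)
      ≤ (n : ℝ) * 2 ^ n * (z₂ - z₁) :=
    mul_le_mul_of_nonneg_right habk₁ hz
  nlinarith
end

section
/- Let F₂ and Q be finite index sets and let {𝓢_p}_{p∈F₂} be pairwise disjoint finite sets, all disjoint from Q; write F₁ := Q ∪ ∪_{p∈F₂} 𝓢_p, k₁ := |F₁|, k₂ := |F₂|. Let r : F₂ → ℝ≥0 and r' : F₁ → ℝ≥0, and set C₂ := Σ_{p∈F₂} r(p), C₁ := Σ_{q∈F₁} r'(q). Let D' be a finite set, uc₁, uc₂ ⊆ D' with |uc₁| ≤ m and |uc₂| ≤ m, and let u : F₂ → ℕ with Σ_{p∈F₂} u(p) = |uc₁ \ uc₂| and v : Q → ℕ with Σ_{e∈Q} v(e) ≤ |uc₂ \ uc₁|. Let a, b ≥ 0 with a + b = 1 and a·k₁ + b·k₂ = k' for some k' ≤ k.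 Then the fractional point with x_p = b for all p ∈ F₂ and q_e = a for all e ∈ Q satisfies Σ_{p∈F₂}(x_p + |𝓢_p|(1 − x_p)) + Σ_{e∈Q} q_e ≤ k and Σ_{p∈F₂}(1 − x_p)·u(p) + Σ_{e∈Q}(1 − q_e)·v(e) ≤ m − |uc₁ ∩ uc₂|, and its objective value Σ_{p∈F₂}[ x_p·(2r(p) + Σ_{q∈𝓢_p} 2r'(q)) + (1 − x_p)·Σ_{q∈𝓢_p} r'(q) ] + Σ_{e∈Q} q_e·r'(e) is at most 2b·C₂ + (1+b)·C₁. Consequently, the optimum value of this covering-knapsack LP is at most 2b·C₂ + (1+b)·C₁. -/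
/-- Part (ii) of Lemma 2.6 of the paper: the fractional point `x ≡ b`, `q ≡ a`
is feasible for the two-dimensional covering-knapsack LP (2C-P) and has
objective value at most `2b·C₂ + (1+b)·C₁`; consequently the optimum of the LP
is at most this quantity.  Here `F₂` indexes the `F₂`-pairs (radii `r`), the
stars `𝓢 p` and the unclustered pairs `Q` partition `F₁` (radii `r'`), and
`u, v` record the sizes of the partitions of `uc₁ \ uc₂` and of (part of)
`uc₂ \ uc₁`. -/
theorem stmt_5 {ι κ δ : Type*} [DecidableEq ι] [DecidableEq κ] [DecidableEq δ]
    (F₂ : Finset ι) (Q : Finset κ) (𝓢 : ι → Finset κ)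
    (hSdisj : ∀ p ∈ F₂, ∀ p' ∈ F₂, p ≠ p' → Disjoint (𝓢 p) (𝓢 p'))
    (hSQdisj : ∀ p ∈ F₂, Disjoint (𝓢 p) Q)
    (r : ι → ℝ) (r' : κ → ℝ)
    (hr : ∀ p ∈ F₂, 0 ≤ r p) (hr' : ∀ q ∈ Q ∪ F₂.biUnion 𝓢, 0 ≤ r' q)
    (D' : Finset δ) (uc₁ uc₂ : Finset δ) (huc₁ : uc₁ ⊆ D') (huc₂ : uc₂ ⊆ D')
    (m : ℕ) (hm₁ : uc₁.card ≤ m) (hm₂ : uc₂.card ≤ m)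
    (u : ι → ℕ) (hu : ∑ p ∈ F₂, u p = (uc₁ \ uc₂).card)
    (v : κ → ℕ) (hv : ∑ e ∈ Q, v e ≤ (uc₂ \ uc₁).card)
    (a b k' k : ℝ) (ha : 0 ≤ a) (hb : 0 ≤ b) (hab : a + b = 1)
    (habk : a * ((Q ∪ F₂.biUnion 𝓢).card : ℝ) + b * (F₂.card : ℝ) = k')
    (hk' : k' ≤ k) :
    -- the cardinality constraint of (2C-P)
    (∑ p ∈ F₂, (b + ((𝓢 p).card : ℝ) * (1 - b))) + (∑ _e ∈ Q, a) ≤ k ∧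
    -- the outlier constraint of (2C-P)
    (∑ p ∈ F₂, (1 - b) * (u p : ℝ)) + (∑ e ∈ Q, (1 - a) * (v e : ℝ)) ≤
      (m : ℝ) - ((uc₁ ∩ uc₂).card : ℝ) ∧
    -- the objective value is at most 2b·C₂ + (1+b)·C₁
    (∑ p ∈ F₂, (b * (2 * r p + ∑ q ∈ 𝓢 p, 2 * r' q) + (1 - b) * ∑ q ∈ 𝓢 p, r' q))
      + (∑ e ∈ Q, a * r' e)
      ≤ 2 * b * (∑ p ∈ F₂, r p) + (1 + b) * (∑ q ∈ Q ∪ F₂.biUnion 𝓢, r' q) := by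
  have hQS : Disjoint Q (F₂.biUnion 𝓢) := by
    rw [Finset.disjoint_biUnion_right]
    exact fun p hp => (hSQdisj p hp).symm
  have hcard : ((Q ∪ F₂.biUnion 𝓢).card : ℝ)
      = (Q.card : ℝ) + ∑ p ∈ F₂, ((𝓢 p).card : ℝ) := by
    rw [Finset.card_union_of_disjoint hQS, Finset.card_biUnion hSdisj]
    push_cast; ring
  have hsum : ∑ q ∈ Q ∪ F₂.biUnion 𝓢, r' q
      = ∑ e ∈ Q, r' e + ∑ p ∈ F₂, ∑ q ∈ 𝓢 p, r' q := by
    rw [Finset.sum_union hQS, Finset.sum_biUnion hSdisj]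
  have ha1 : a = 1 - b := by linarith
  have hb1 : b ≤ 1 := by linarith
  have hQpos : 0 ≤ ∑ e ∈ Q, r' e :=
    Finset.sum_nonneg fun e he => hr' e (Finset.mem_union_left _ he)
  refine ⟨?_, ?_, ?_⟩
  · have : (∑ p ∈ F₂, (b + ((𝓢 p).card : ℝ) * (1 - b))) + (∑ _e ∈ Q, a) = k' := by
      rw [← habk, hcard, Finset.sum_add_distrib, Finset.sum_const, Finset.sum_const,
        nsmul_eq_mul, nsmul_eq_mul, ha1, ← Finset.sum_mul]
      ring
    linarith
  · have h1 : (uc₁ \ uc₂).card + (uc₁ ∩ uc₂).card = uc₁.card :=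
      Finset.card_sdiff_add_card_inter uc₁ uc₂
    have h2 : (uc₂ \ uc₁).card + (uc₂ ∩ uc₁).card = uc₂.card :=
      Finset.card_sdiff_add_card_inter uc₂ uc₁
    have hi : (uc₂ ∩ uc₁).card = (uc₁ ∩ uc₂).card := by rw [Finset.inter_comm]
    have e1 : ∑ p ∈ F₂, (1 - b) * (u p : ℝ) = (1 - b) * ((uc₁ \ uc₂).card : ℝ) := by
      rw [← Finset.mul_sum, ← hu]; push_cast; ring
    have e2 : ∑ e ∈ Q, (1 - a) * (v e : ℝ) ≤ b * ((uc₂ \ uc₁).card : ℝ) := by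
      rw [← Finset.mul_sum]
      have : (∑ e ∈ Q, (v e : ℝ)) ≤ ((uc₂ \ uc₁).card : ℝ) := by
        exact_mod_cast Nat.cast_le.mpr (by exact_mod_cast hv)
      have hba : 1 - a = b := by linarith
      rw [hba]
      exact mul_le_mul_of_nonneg_left this hb
    have hm₁' : ((uc₁ \ uc₂).card : ℝ) ≤ (m : ℝ) - ((uc₁ ∩ uc₂).card : ℝ) := by
      have hnat : (uc₁ \ uc₂).card + (uc₁ ∩ uc₂).card ≤ m := by rw [h1]; exact hm₁
      have : ((uc₁ \ uc₂).card : ℝ) + ((uc₁ ∩ uc₂).card : ℝ) ≤ (m : ℝ) := by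
        exact_mod_cast hnat
      linarith
    have hm₂' : ((uc₂ \ uc₁).card : ℝ) ≤ (m : ℝ) - ((uc₁ ∩ uc₂).card : ℝ) := by
      have hnat : (uc₂ \ uc₁).card + (uc₁ ∩ uc₂).card ≤ m := by
        rw [← hi, h2]; exact hm₂
      have : ((uc₂ \ uc₁).card : ℝ) + ((uc₁ ∩ uc₂).card : ℝ) ≤ (m : ℝ) := by
        exact_mod_cast hnat
      linarith
    calc (∑ p ∈ F₂, (1 - b) * (u p : ℝ)) + (∑ e ∈ Q, (1 - a) * (v e : ℝ))
        ≤ (1 - b) * ((uc₁ \ uc₂).card : ℝ) + b * ((uc₂ \ uc₁).card : ℝ) := by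
          rw [e1]; linarith
      _ ≤ (1 - b) * ((m : ℝ) - ((uc₁ ∩ uc₂).card : ℝ))
            + b * ((m : ℝ) - ((uc₁ ∩ uc₂).card : ℝ)) := by
          gcongr <;> linarith
      _ = (m : ℝ) - ((uc₁ ∩ uc₂).card : ℝ) := by ring
  · have key : ∀ p ∈ F₂,
        b * (2 * r p + ∑ q ∈ 𝓢 p, 2 * r' q) + (1 - b) * ∑ q ∈ 𝓢 p, r' q
        = 2 * b * r p + (1 + b) * ∑ q ∈ 𝓢 p, r' q := by
      intro p hp
      have h2 : ∑ q ∈ 𝓢 p, 2 * r' q = 2 * ∑ q ∈ 𝓢 p, r' q := by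
        rw [Finset.mul_sum]
      rw [h2]; ring
    rw [Finset.sum_congr rfl key, Finset.sum_add_distrib, ← Finset.mul_sum,
      ← Finset.mul_sum, hsum]
    have : ∑ e ∈ Q, a * r' e = a * ∑ e ∈ Q, r' e := by rw [Finset.mul_sum]
    rw [this]
    have : a * ∑ e ∈ Q, r' e ≤ (1 + b) * ∑ e ∈ Q, r' e := by
      apply mul_le_mul_of_nonneg_right _ hQpos; linarith
    linarith
end

section
/- Let ι be a finite type, g₁, g₂ : (ι → ℝ) → ℝ affine functions, and k₁, k₂ ∈ ℝ. Let P := {x : ι → ℝ | (∀ i, 0 ≤ x i ≤ 1) ∧ g₁(x) ≤ k₁ ∧ g₂(x) ≤ k₂}. If x* is an extreme point of P, then the number of indices i with 0 < x* i < 1 is at most the number of j ∈ {1,2} with g_j(x*) = k_j; in particular x* has at most two fractional coordinates. -/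
open Set Filter

set_option maxHeartbeats 1000000 in
/-- The polyhedral fact used in Lemma 2.7 of the paper: an extreme point of the
box `[0,1]^ι` intersected with two affine constraints `g j x ≤ k j` (j = 1,2)
has at most as many fractional coordinates as tight constraints among the two
non-bound constraints; in particular at most two fractional coordinates. -/
theorem stmt_7 {ι : Type*} [Fintype ι]
    (g : Fin 2 → ((ι → ℝ) →ᵃ[ℝ] ℝ)) (k : Fin 2 → ℝ)
    (x : ι → ℝ)
    (hx : x ∈ Set.extremePoints ℝ
      {y : ι → ℝ | (∀ i, 0 ≤ y i ∧ y i ≤ 1) ∧ ∀ j, g j y ≤ k j}) :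
    {i | 0 < x i ∧ x i < 1}.ncard ≤ {j : Fin 2 | g j x = k j}.ncard ∧
    {i | 0 < x i ∧ x i < 1}.ncard ≤ 2 := by
  classical
  obtain ⟨⟨hbox, hcon⟩, hext⟩ := hx
  set F : Set ι := {i | 0 < x i ∧ x i < 1} with hF
  set T : Set (Fin 2) := {j : Fin 2 | g j x = k j} with hTdef
  have hT2 : T.ncard ≤ 2 := by
    have := Set.ncard_le_ncard (Set.subset_univ T) Set.finite_univ
    simpa [Set.ncard_univ] using this
  suffices hmain : F.ncard ≤ T.ncard by exact ⟨hmain, hmain.trans hT2⟩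
  by_contra hlt
  push_neg at hlt
  haveI : Fintype ↥F := Fintype.ofFinite _
  haveI : Fintype ↥T := Fintype.ofFinite _
  -- extension-by-zero linear map
  let ext : (↥F → ℝ) →ₗ[ℝ] (ι → ℝ) :=
    { toFun := fun d i => if h : i ∈ F then d ⟨i, h⟩ else 0
      map_add' := by intro a b; funext i; by_cases h : i ∈ F <;> simp [h]
      map_smul' := by intro c a; funext i; by_cases h : i ∈ F <;> simp [h] }
  let φ : (↥F → ℝ) →ₗ[ℝ] (↥T → ℝ) :=
    { toFun := fun d j => (g j).linear (ext d)
      map_add' := by intro a b; funext j; simp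
      map_smul' := by intro c a; funext j; simp }
  have hnotinj : ¬ Function.Injective φ := by
    intro hinj
    have h1 := LinearMap.finrank_le_finrank_of_injective hinj
    rw [Module.finrank_pi, Module.finrank_pi] at h1
    have hFcard : F.ncard = Fintype.card ↥F := by
      rw [Set.ncard_eq_toFinset_card', Set.toFinset_card]
    have hTcard : T.ncard = Fintype.card ↥T := by
      rw [Set.ncard_eq_toFinset_card', Set.toFinset_card]
    omega
  obtain ⟨a, b, hab, hne⟩ := Function.not_injective_iff.mp hnotinj
  set d : ↥F → ℝ := a - b with hddef
  have hd : d ≠ 0 := sub_ne_zero.mpr hne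
  have hφd : φ d = 0 := by
    rw [hddef, map_sub, hab, sub_self]
  set v : ι → ℝ := ext d with hvdef
  have hv0 : ∀ i ∉ F, v i = 0 := by
    intro i h
    simp [hvdef, ext, h]
  have hvne : v ≠ 0 := by
    obtain ⟨i0, hi0⟩ := Function.ne_iff.mp hd
    intro h
    apply hi0
    have h2 := congrFun h i0.val
    simpa [hvdef, ext, i0.2] using h2
  have hlinT : ∀ j (hj : j ∈ T), (g j).linear v = 0 := by
    intro j hj
    have := congrFun hφd ⟨j, hj⟩
    simpa [φ] using this
  -- the perturbed points stay in the set for small t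
  have key : ∀ (j : Fin 2) (t : ℝ), g j (t • v + x) = t * (g j).linear v + g j x := by
    intro j t
    have := (g j).map_vadd x (t • v)
    simpa [vadd_eq_add, map_smul, smul_eq_mul] using this
  have hev : ∀ᶠ t : ℝ in nhds 0,
      (t • v + x) ∈ {y : ι → ℝ | (∀ i, 0 ≤ y i ∧ y i ≤ 1) ∧ ∀ j, g j y ≤ k j} := by
    have hbox' : ∀ᶠ t : ℝ in nhds 0, ∀ i, 0 ≤ (t • v + x) i ∧ (t • v + x) i ≤ 1 := by
      rw [eventually_all]
      intro i
      by_cases hi : i ∈ F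
      · have hc : Continuous (fun t : ℝ => t * v i + x i) := (continuous_id.mul continuous_const).add continuous_const
        have h0 : (0:ℝ) * v i + x i ∈ Set.Ioo (0:ℝ) 1 := by
          simpa [hF] using hi
        have hevI := (hc.tendsto 0).eventually (isOpen_Ioo.eventually_mem h0)
        filter_upwards [hevI] with t ht
        constructor
        · have := ht.1.le; simpa [smul_eq_mul] using this
        · have := ht.2.le; simpa [smul_eq_mul] using this
      · have hvi : v i = 0 := hv0 i hi
        filter_upwards with t
        simpa [hvi, smul_eq_mul] using hbox i
    have hcon' : ∀ᶠ t : ℝ in nhds 0, ∀ j, g j (t • v + x) ≤ k j := by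
      rw [eventually_all]
      intro j
      by_cases hj : j ∈ T
      · filter_upwards with t
        rw [key j t, hlinT j hj]
        simpa using le_of_eq hj
      · have hlt' : g j x < k j := lt_of_le_of_ne (hcon j) hj
        have hc : Continuous (fun t : ℝ => t * (g j).linear v + g j x) := (continuous_id.mul continuous_const).add continuous_const
        have h0 : (0:ℝ) * (g j).linear v + g j x ∈ Set.Iio (k j) := by simpa using hlt'
        have hevI := (hc.tendsto 0).eventually (isOpen_Iio.eventually_mem h0)
        filter_upwards [hevI] with t ht
        rw [key j t]
        exact le_of_lt ht
    filter_upwards [hbox', hcon'] with t h1 h2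
    exact ⟨h1, h2⟩
  obtain ⟨ε, hε, hball⟩ := Metric.eventually_nhds_iff.mp hev
  have hd1 : dist (ε/2) (0:ℝ) < ε := by
    rw [Real.dist_eq, sub_zero, abs_of_pos (by linarith)]
    linarith
  have hd2 : dist (-(ε/2)) (0:ℝ) < ε := by
    rw [Real.dist_eq, sub_zero, abs_of_neg (by linarith)]
    linarith
  have hmem₁ := hball hd1
  have hmem₂ := hball hd2
  have hseg : x ∈ openSegment ℝ ((ε/2) • v + x) ((-(ε/2)) • v + x) := by
    refine ⟨1/2, 1/2, by norm_num, by norm_num, by norm_num, ?_⟩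
    module
  have heq := hext hmem₁ hmem₂ hseg
  have hzero : (ε/2) • v = 0 := by
    calc (ε/2) • v = ((ε/2) • v + x) - x := by abel
    _ = 0 := by rw [heq]; abel
  rcases smul_eq_zero.mp hzero with h | h
  · linarith
  · exact hvne h
end

section
/- Let A and B be finite sets, s, u : A → ℕ, v : B → ℕ, and k, M ∈ ℕ. Let P be the set of pairs (x, q) with x : A → [0,1] and q : B → [0,1] satisfying Σ_{a∈A}(x_a + s_a·(1 − x_a)) + Σ_{b∈B} q_b ≤ k and Σ_{a∈A}(1 − x_a)·u_a + Σ_{b∈B}(1 − q_b)·v_b ≤ M. If (x*, q*) is an extreme point of P, then there exists an integral point (x̃, q̃) ∈ P, with every coordinate in {0,1}, that agrees with (x*, q*) on every coordinate of (x*, q*) lying in {0,1}; in particular (x̃, q̃) differs from (x*, q*) in at most two coordinates. -/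
set_option maxHeartbeats 1000000

open Finset

lemma round_key {I : Type*} [Fintype I] (c : I → ℤ) (d : I → ℕ) (K1 K2 : ℤ)
    (hc : ∀ i, c i ≤ 1) (y : I → ℝ) (hy0 : ∀ i, 0 ≤ y i) (hy1 : ∀ i, y i ≤ 1)
    (h1 : ∑ i, (c i : ℝ) * y i ≤ (K1 : ℝ)) (h2 : (K2 : ℝ) ≤ ∑ i, (d i : ℝ) * y i)
    (hfrac : {i | ¬(y i = 0 ∨ y i = 1)}.ncard ≤ 2) :
    ∃ z : I → ℝ, (∀ i, z i = 0 ∨ z i = 1) ∧ (∀ i, (y i = 0 ∨ y i = 1) → z i = y i) ∧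
      ∑ i, (c i : ℝ) * z i ≤ (K1 : ℝ) ∧ (K2 : ℝ) ≤ ∑ i, (d i : ℝ) * z i := by
  classical
  set F : Finset I := Finset.univ.filter (fun i => ¬(y i = 0 ∨ y i = 1)) with hF
  have hFcard : F.card ≤ 2 := by
    have : {i | ¬(y i = 0 ∨ y i = 1)} = ↑F := by ext i; simp [hF]
    rwa [this, Set.ncard_coe_finset] at hfrac
  have hmemF : ∀ i, i ∈ F ↔ ¬(y i = 0 ∨ y i = 1) := by intro i; simp [hF]
  have hmemFc : ∀ i, i ∈ Fᶜ ↔ (y i = 0 ∨ y i = 1) := by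
    intro i; simp [hF]; tauto
  set n1 : ℤ := ∑ i ∈ Fᶜ, (if y i = 1 then c i else 0) with hn1def
  have hn1 : (n1 : ℝ) = ∑ i ∈ Fᶜ, (c i : ℝ) * y i := by
    rw [hn1def]; push_cast
    refine Finset.sum_congr rfl (fun i hi => ?_)
    rcases (hmemFc i).1 hi with h0 | h1
    · rw [if_neg (by rw [h0]; norm_num), h0, mul_zero]
    · rw [if_pos h1, h1, mul_one]
  have hfr : ∀ i ∈ F, 0 < y i ∧ y i < 1 := by
    intro i hi
    have := (hmemF i).1 hi
    push_neg at this
    exact ⟨lt_of_le_of_ne (hy0 i) (Ne.symm this.1), lt_of_le_of_ne (hy1 i) this.2⟩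
  have hsum : ∀ f : I → ℝ, ∑ i, f i = ∑ i ∈ Fᶜ, f i + ∑ i ∈ F, f i :=
    fun f => (Finset.sum_compl_add_sum F f).symm
  rcases Finset.eq_empty_or_nonempty F with hFe | ⟨i0, hi0⟩
  · -- no fractional coordinates
    refine ⟨y, fun i => ?_, fun i _ => rfl, h1, h2⟩
    have : i ∈ Fᶜ := by rw [hFe]; simp
    exact (hmemFc i).1 this
  rcases Finset.eq_empty_or_nonempty (F.erase i0) with hF1 | ⟨i1, hi1⟩
  · -- exactly one fractional coordinate i0 : round it up to 1
    have hFeq : F = {i0} := by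
      apply Finset.eq_singleton_iff_unique_mem.2
      refine ⟨hi0, fun j hj => ?_⟩
      by_contra hne
      exact (Finset.notMem_empty j) (hF1 ▸ Finset.mem_erase.2 ⟨hne, hj⟩)
    have hFsum : ∀ f : I → ℝ, ∑ i ∈ F, f i = f i0 := fun f => by
      rw [hFeq, Finset.sum_singleton]
    set z : I → ℝ := Function.update y i0 1 with hz
    have hzi0 : z i0 = 1 := by simp [hz]
    have hzFc : ∀ i ∈ Fᶜ, z i = y i := by
      intro i hi
      have : i ≠ i0 := by
        intro h; subst h
        exact (Finset.mem_compl.1 hi) hi0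
      simp [hz, Function.update_of_ne this]
    have ⟨hy00, hy01⟩ := hfr i0 hi0
    refine ⟨z, ?_, ?_, ?_, ?_⟩
    · intro i
      by_cases h : i = i0
      · subst h; right; exact hzi0
      · rw [hz, Function.update_of_ne h]
        exact (hmemFc i).1 (Finset.mem_compl.2 (fun hi => h (by
          rw [hFeq] at hi; exact Finset.mem_singleton.1 hi)))
    · intro i hi
      exact hzFc i ((hmemFc i).2 hi)
    · -- constraint 1
      have ezc : ∑ i ∈ Fᶜ, (c i : ℝ) * z i = (n1 : ℝ) := by
        rw [hn1]; exact Finset.sum_congr rfl (fun i hi => by rw [hzFc i hi])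
      have ez : ∑ i, (c i : ℝ) * z i = (n1 : ℝ) + (c i0 : ℝ) := by
        rw [hsum (fun i => (c i : ℝ) * z i), ezc, hFsum, hzi0, mul_one]
      have ey : ∑ i, (c i : ℝ) * y i = (n1 : ℝ) + (c i0 : ℝ) * y i0 := by
        rw [hsum (fun i => (c i : ℝ) * y i), ← hn1, hFsum]
      rw [ey] at h1
      rw [ez]
      rcases lt_or_eq_of_le (hc i0) with hlt | heq
      · have hle : (c i0 : ℝ) ≤ 0 := by exact_mod_cast Int.lt_add_one_iff.1 hlt
        nlinarith
      · have hc1 : (c i0 : ℝ) = 1 := by exact_mod_cast heq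
        rw [hc1] at h1 ⊢
        have hlt : (n1 : ℝ) < (K1 : ℝ) := by nlinarith
        have h2' : n1 + 1 ≤ K1 := Int.add_one_le_iff.2 (by exact_mod_cast hlt)
        exact_mod_cast h2'
    · -- constraint 2: rounding up only helps
      refine le_trans h2 (Finset.sum_le_sum (fun i _ => ?_))
      by_cases h : i = i0
      · rw [h, hzi0]
        exact mul_le_mul_of_nonneg_left (hy1 i0) (by positivity)
      · rw [hz, Function.update_of_ne h]
  · -- two fractional coordinates
    have hi1F : i1 ∈ F := Finset.mem_of_mem_erase hi1
    have hne : i0 ≠ i1 := fun h => (Finset.mem_erase.1 hi1).1 h.symm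
    have hFeq : F = {i0, i1} := by
      apply (Finset.eq_of_subset_of_card_le ?_ ?_).symm
      · intro j hj
        rcases Finset.mem_insert.1 hj with h | h
        · exact h ▸ hi0
        · exact (Finset.mem_singleton.1 h) ▸ hi1F
      · rw [Finset.card_insert_of_notMem (by simpa using hne), Finset.card_singleton]
        exact hFcard
    have intstep : ∀ m : ℤ, (m : ℝ) < (K1 : ℝ) → (m : ℝ) + 1 ≤ (K1 : ℝ) := by
      intro m hm
      exact_mod_cast Int.add_one_le_iff.2 (by exact_mod_cast hm)
    have main : ∀ j0 j1 : I, j0 ≠ j1 → F = {j0, j1} → (d j1 : ℝ) ≤ (d j0 : ℝ) →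
        ∃ z : I → ℝ, (∀ i, z i = 0 ∨ z i = 1) ∧ (∀ i, (y i = 0 ∨ y i = 1) → z i = y i) ∧
          ∑ i, (c i : ℝ) * z i ≤ (K1 : ℝ) ∧ (K2 : ℝ) ≤ ∑ i, (d i : ℝ) * z i := by
      clear hne hFeq hi0 hi1 hi1F
      intro j0 j1 hne hFeq hd
      have hj0 : j0 ∈ F := hFeq ▸ Finset.mem_insert_self _ _
      have hj1 : j1 ∈ F := hFeq ▸ Finset.mem_insert_of_mem (Finset.mem_singleton_self _)
      have ⟨hy00, hy01⟩ := hfr j0 hj0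
      have ⟨hy10, hy11⟩ := hfr j1 hj1
      have hFsum : ∀ f : I → ℝ, ∑ i ∈ F, f i = f j0 + f j1 := fun f => by
        rw [hFeq, Finset.sum_pair hne]
      -- generic facts for z agreeing with y off F
      have hgen : ∀ z : I → ℝ, (∀ i, i ≠ j0 → i ≠ j1 → z i = y i) →
          ((∀ i, (y i = 0 ∨ y i = 1) → z i = y i) ∧
           ∑ i, (c i : ℝ) * z i = (n1 : ℝ) + (c j0 : ℝ) * z j0 + (c j1 : ℝ) * z j1 ∧
           ∑ i, (d i : ℝ) * z i
             = (∑ i ∈ Fᶜ, (d i : ℝ) * y i) + (d j0 : ℝ) * z j0 + (d j1 : ℝ) * z j1) := by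
        intro z hzoff
        have hzFc : ∀ i ∈ Fᶜ, z i = y i := by
          intro i hi
          have hiF := Finset.mem_compl.1 hi
          refine hzoff i (fun h => hiF (h ▸ hj0)) (fun h => hiF (h ▸ hj1))
        refine ⟨fun i hi => hzFc i ((hmemFc i).2 hi), ?_, ?_⟩
        · have e : ∑ i ∈ Fᶜ, (c i : ℝ) * z i = ∑ i ∈ Fᶜ, (c i : ℝ) * y i :=
            Finset.sum_congr rfl (fun i hi => by rw [hzFc i hi])
          rw [hsum (fun i => (c i : ℝ) * z i), hFsum, hn1, e]; ring
        · have e : ∑ i ∈ Fᶜ, (d i : ℝ) * z i = ∑ i ∈ Fᶜ, (d i : ℝ) * y i :=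
            Finset.sum_congr rfl (fun i hi => by rw [hzFc i hi])
          rw [hsum (fun i => (d i : ℝ) * z i), hFsum, e]; ring
      have ey : (n1 : ℝ) + (c j0 : ℝ) * y j0 + (c j1 : ℝ) * y j1 ≤ (K1 : ℝ) := by
        have := (hgen y (fun _ _ _ => rfl)).2.1
        linarith [this ▸ h1]
      by_cases hcase : c j0 = 1 ∧ c j1 = 1 ∧ K1 ≤ n1 + 1
      · -- round j0 up to 1, j1 down to 0
        obtain ⟨hc0, hc1, hK⟩ := hcase
        set z : I → ℝ := Function.update (Function.update y j0 1) j1 0 with hz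
        have hzj0 : z j0 = 1 := by
          rw [hz, Function.update_of_ne hne, Function.update_self]
        have hzj1 : z j1 = 0 := by rw [hz, Function.update_self]
        have hzoff : ∀ i, i ≠ j0 → i ≠ j1 → z i = y i := by
          intro i h0 h1
          rw [hz, Function.update_of_ne h1, Function.update_of_ne h0]
        obtain ⟨hagree, ec, ed⟩ := hgen z hzoff
        have hc0' : (c j0 : ℝ) = 1 := by exact_mod_cast hc0
        have hc1' : (c j1 : ℝ) = 1 := by exact_mod_cast hc1
        have hK' : (K1 : ℝ) ≤ (n1 : ℝ) + 1 := by exact_mod_cast hK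
        rw [hc0', hc1'] at ey
        have hysum : y j0 + y j1 ≤ 1 := by linarith
        have ed' : (K2 : ℝ) ≤ (∑ i ∈ Fᶜ, (d i : ℝ) * y i) + (d j0 : ℝ) * y j0
            + (d j1 : ℝ) * y j1 := by
          have := (hgen y (fun _ _ _ => rfl)).2.2
          linarith [this ▸ h2]
        refine ⟨z, ?_, hagree, ?_, ?_⟩
        · intro i
          by_cases h1 : i = j1
          · left; rw [h1, hzj1]
          by_cases h0 : i = j0
          · right; rw [h0, hzj0]
          · rw [hzoff i h0 h1]
            exact (hmemFc i).1 (Finset.mem_compl.2 (fun hiF => by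
              rw [hFeq] at hiF
              rcases Finset.mem_insert.1 hiF with h | h
              · exact h0 h
              · exact h1 (Finset.mem_singleton.1 h)))
        · rw [ec, hzj0, hzj1, hc0', hc1', mul_one, mul_zero, add_zero]
          have : (n1 : ℝ) < (K1 : ℝ) := by linarith
          exact intstep n1 this
        · rw [ed, hzj0, hzj1, mul_one, mul_zero, add_zero]
          have hd0 : (0 : ℝ) ≤ (d j1 : ℝ) := by positivity
          nlinarith
      · -- round both up to 1
        set z : I → ℝ := Function.update (Function.update y j0 1) j1 1 with hz
        have hzj0 : z j0 = 1 := by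
          rw [hz, Function.update_of_ne hne, Function.update_self]
        have hzj1 : z j1 = 1 := by rw [hz, Function.update_self]
        have hzoff : ∀ i, i ≠ j0 → i ≠ j1 → z i = y i := by
          intro i h0 h1
          rw [hz, Function.update_of_ne h1, Function.update_of_ne h0]
        obtain ⟨hagree, ec, ed⟩ := hgen z hzoff
        refine ⟨z, ?_, hagree, ?_, ?_⟩
        · intro i
          by_cases h1 : i = j1
          · right; rw [h1, hzj1]
          by_cases h0 : i = j0
          · right; rw [h0, hzj0]
          · rw [hzoff i h0 h1]
            exact (hmemFc i).1 (Finset.mem_compl.2 (fun hiF => by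
              rw [hFeq] at hiF
              rcases Finset.mem_insert.1 hiF with h | h
              · exact h0 h
              · exact h1 (Finset.mem_singleton.1 h)))
        · -- constraint 1 for rounding both up
          rw [ec, hzj0, hzj1, mul_one, mul_one]
          rcases lt_or_eq_of_le (hc j0) with hlt0 | heq0 <;>
            rcases lt_or_eq_of_le (hc j1) with hlt1 | heq1
          · have h0 : (c j0 : ℝ) ≤ 0 := by exact_mod_cast Int.lt_add_one_iff.1 hlt0
            have h1' : (c j1 : ℝ) ≤ 0 := by exact_mod_cast Int.lt_add_one_iff.1 hlt1
            nlinarith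
          · have h0 : (c j0 : ℝ) ≤ 0 := by exact_mod_cast Int.lt_add_one_iff.1 hlt0
            have h1' : (c j1 : ℝ) = 1 := by exact_mod_cast heq1
            rw [h1'] at ey ⊢
            have hlt : (n1 : ℝ) + (c j0 : ℝ) < (K1 : ℝ) := by nlinarith
            have := intstep (n1 + c j0) (by push_cast; linarith)
            push_cast at this; linarith
          · have h0 : (c j0 : ℝ) = 1 := by exact_mod_cast heq0
            have h1' : (c j1 : ℝ) ≤ 0 := by exact_mod_cast Int.lt_add_one_iff.1 hlt1
            rw [h0] at ey ⊢
            have hlt : (n1 : ℝ) + (c j1 : ℝ) < (K1 : ℝ) := by nlinarith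
            have := intstep (n1 + c j1) (by push_cast; linarith)
            push_cast at this; linarith
          · have hK : ¬ (K1 ≤ n1 + 1) := fun h => hcase ⟨heq0, heq1, h⟩
            have : n1 + 2 ≤ K1 := by omega
            have : (n1 : ℝ) + 2 ≤ (K1 : ℝ) := by exact_mod_cast this
            have h0 : (c j0 : ℝ) = 1 := by exact_mod_cast heq0
            have h1' : (c j1 : ℝ) = 1 := by exact_mod_cast heq1
            rw [h0, h1']; linarith
        · -- constraint 2: rounding up only helps
          refine le_trans h2 (Finset.sum_le_sum (fun i _ => ?_))
          by_cases h1 : i = j1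
          · rw [h1, hzj1]
            exact mul_le_mul_of_nonneg_left (hy1 j1) (by positivity)
          by_cases h0 : i = j0
          · rw [h0, hzj0]
            exact mul_le_mul_of_nonneg_left (hy1 j0) (by positivity)
          · rw [hzoff i h0 h1]
    rcases le_total (d i1 : ℝ) (d i0 : ℝ) with hd | hd
    · exact main i0 i1 hne hFeq hd
    · exact main i1 i0 hne.symm (by rw [hFeq, Finset.pair_comm]) hd


open Finset

-- ncard over a sum type splits
lemma ncard_sum_split {A B : Type*} [Fintype A] [Fintype B] (p : A ⊕ B → Prop) :
    {t : A ⊕ B | p t}.ncard = {a | p (Sum.inl a)}.ncard + {b | p (Sum.inr b)}.ncard := by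
  have he : {t : A ⊕ B | p t}
      = Sum.inl '' {a | p (Sum.inl a)} ∪ Sum.inr '' {b | p (Sum.inr b)} := by
    ext t; cases t <;> simp
  rw [he, Set.ncard_union_eq ?_ (Set.toFinite _) (Set.toFinite _),
    Set.ncard_image_of_injective _ Sum.inl_injective,
    Set.ncard_image_of_injective _ Sum.inr_injective]
  rw [Set.disjoint_left]
  rintro t ⟨a, _, rfl⟩ ⟨b, _, hb⟩
  simp at hb

/-- An extreme point of a set cut out by box constraints and two linear
inequalities has at most two fractional coordinates. -/
lemma frac_bound {A B : Type*} [Fintype A] [Fintype B]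
    (cA dA : A → ℝ) (cB dB : B → ℝ) (K1 K2 : ℝ)
    (P : Set ((A → ℝ) × (B → ℝ)))
    (hP : ∀ w : (A → ℝ) × (B → ℝ), w ∈ P ↔ ((∀ a, 0 ≤ w.1 a ∧ w.1 a ≤ 1) ∧
      (∀ b, 0 ≤ w.2 b ∧ w.2 b ≤ 1) ∧
      (∑ a, cA a * w.1 a) + (∑ b, cB b * w.2 b) ≤ K1 ∧
      (∑ a, dA a * w.1 a) + (∑ b, dB b * w.2 b) ≤ K2))
    (xq : (A → ℝ) × (B → ℝ)) (hxq : xq ∈ Set.extremePoints ℝ P) :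
    {t : A ⊕ B | ¬ (Sum.elim xq.1 xq.2 t = 0 ∨ Sum.elim xq.1 xq.2 t = 1)}.ncard ≤ 2 := by
  classical
  set y : A ⊕ B → ℝ := Sum.elim xq.1 xq.2 with hy
  set c : A ⊕ B → ℝ := Sum.elim cA cB with hc
  set d : A ⊕ B → ℝ := Sum.elim dA dB with hd
  by_contra hcon
  push_neg at hcon
  obtain ⟨T, hTsub, hT3⟩ := Set.exists_subset_card_eq hcon
  obtain ⟨t1, t2, t3, h12, h13, h23, rfl⟩ := Set.ncard_eq_three.1 hT3
  have hfr : ∀ t ∈ ({t1, t2, t3} : Set (A ⊕ B)), 0 < y t ∧ y t < 1 := by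
    intro t ht
    have h : y t ≠ 0 ∧ y t ≠ 1 := by simpa using hTsub ht
    have h0 : 0 ≤ y t ∧ y t ≤ 1 := by
      have hmem := (hP xq).1 hxq.1
      cases t with
      | inl a => exact hmem.1 a
      | inr b => exact hmem.2.1 b
    exact ⟨lt_of_le_of_ne h0.1 (Ne.symm h.1), lt_of_le_of_ne h0.2 h.2⟩
  -- three vectors in ℝ² are dependent
  set Mm : Matrix (Fin 2) (Fin 3) ℝ := Matrix.of ![![c t1, c t2, c t3], ![d t1, d t2, d t3]]
    with hMm
  have hninj : ¬ Function.Injective (Matrix.toLin' Mm) := by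
    intro hinj
    have hle := LinearMap.finrank_le_finrank_of_injective hinj
    simp [Module.finrank_pi] at hle
  have hker : LinearMap.ker (Matrix.toLin' Mm) ≠ ⊥ := by
    rwa [ne_eq, LinearMap.ker_eq_bot]
  obtain ⟨e, hemem, hene⟩ := Submodule.exists_mem_ne_zero_of_ne_bot hker
  have he0 : Matrix.toLin' Mm e = 0 := LinearMap.mem_ker.1 hemem
  rw [Matrix.toLin'_apply] at he0
  have hrel1 : c t1 * e 0 + c t2 * e 1 + c t3 * e 2 = 0 := by
    have := congrFun he0 0
    simp [Matrix.mulVec, dotProduct, hMm, Fin.sum_univ_three, Matrix.vecHead, Matrix.vecTail] at this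
    linarith
  have hrel2 : d t1 * e 0 + d t2 * e 1 + d t3 * e 2 = 0 := by
    have := congrFun he0 1
    simp [Matrix.mulVec, dotProduct, hMm, Fin.sum_univ_three, Matrix.vecHead, Matrix.vecTail] at this
    linarith
  -- the perturbation direction
  set δ : A ⊕ B → ℝ := fun t => (if t = t1 then e 0 else 0) + (if t = t2 then e 1 else 0)
    + (if t = t3 then e 2 else 0) with hδ
  have hδ1 : δ t1 = e 0 := by simp [hδ, h12, h13]
  have hδ2 : δ t2 = e 1 := by simp [hδ, Ne.symm h12, h23]
  have hδ3 : δ t3 = e 2 := by simp [hδ, Ne.symm h13, Ne.symm h23]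
  have hδ0 : ∀ t, t ≠ t1 → t ≠ t2 → t ≠ t3 → δ t = 0 := by
    intro t ha hb hc; simp [hδ, ha, hb, hc]
  have hδsum : ∀ g : A ⊕ B → ℝ, ∑ t, g t * δ t = g t1 * e 0 + g t2 * e 1 + g t3 * e 2 := by
    intro g
    simp only [hδ, mul_add, Finset.sum_add_distrib, mul_ite, mul_zero]
    rw [Finset.sum_ite_eq' Finset.univ t1 (fun t => g t * e 0),
      Finset.sum_ite_eq' Finset.univ t2 (fun t => g t * e 1),
      Finset.sum_ite_eq' Finset.univ t3 (fun t => g t * e 2)]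
    simp
  have hcrel : ∑ t, c t * δ t = 0 := by rw [hδsum]; exact hrel1
  have hdrel : ∑ t, d t * δ t = 0 := by rw [hδsum]; exact hrel2
  -- choose ε
  have hfr1 := hfr t1 (by simp)
  have hfr2 := hfr t2 (by simp)
  have hfr3 := hfr t3 (by simp)
  set r : (A ⊕ B) → ℝ := fun t => min (y t) (1 - y t) with hr
  set ε : ℝ := min (min (r t1 / (|e 0| + 1)) (r t2 / (|e 1| + 1))) (r t3 / (|e 2| + 1)) with hε
  have hrpos : 0 < r t1 ∧ 0 < r t2 ∧ 0 < r t3 := by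
    refine ⟨?_, ?_, ?_⟩ <;> rw [hr] <;> simp only [lt_min_iff] <;>
      constructor <;> linarith [hfr1.1, hfr1.2, hfr2.1, hfr2.2, hfr3.1, hfr3.2]
  have hεpos : 0 < ε := by
    rw [hε]
    simp only [lt_min_iff]
    refine ⟨⟨?_, ?_⟩, ?_⟩ <;> apply div_pos (by tauto) (by positivity)
  have hbound : ∀ t, |ε * δ t| ≤ r t ∨ δ t = 0 := by
    intro t
    by_cases h1 : t = t1
    · left; rw [h1]
      rw [abs_mul, abs_of_pos hεpos, hδ1]
      calc ε * |e 0| ≤ (r t1 / (|e 0| + 1)) * |e 0| := by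
            apply mul_le_mul_of_nonneg_right _ (abs_nonneg _)
            rw [hε]; exact le_trans (min_le_left _ _) (min_le_left _ _)
        _ ≤ r t1 := by
            rw [div_mul_eq_mul_div, div_le_iff₀ (by positivity)]
            nlinarith [abs_nonneg (e 0), hrpos.1]
    by_cases h2 : t = t2
    · left; rw [h2]
      rw [abs_mul, abs_of_pos hεpos, hδ2]
      calc ε * |e 1| ≤ (r t2 / (|e 1| + 1)) * |e 1| := by
            apply mul_le_mul_of_nonneg_right _ (abs_nonneg _)
            rw [hε]; exact le_trans (min_le_left _ _) (min_le_right _ _)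
        _ ≤ r t2 := by
            rw [div_mul_eq_mul_div, div_le_iff₀ (by positivity)]
            nlinarith [abs_nonneg (e 1), hrpos.2.1]
    by_cases h3 : t = t3
    · left; rw [h3]
      rw [abs_mul, abs_of_pos hεpos, hδ3]
      calc ε * |e 2| ≤ (r t3 / (|e 2| + 1)) * |e 2| := by
            apply mul_le_mul_of_nonneg_right _ (abs_nonneg _)
            rw [hε]; exact min_le_right _ _
        _ ≤ r t3 := by
            rw [div_mul_eq_mul_div, div_le_iff₀ (by positivity)]
            nlinarith [abs_nonneg (e 2), hrpos.2.2]
    · right; exact hδ0 t h1 h2 h3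
  -- coordinatewise bounds for perturbed points
  have hbnd : ∀ (σ : ℝ), |σ| ≤ ε → ∀ t, 0 ≤ y t + σ * δ t ∧ y t + σ * δ t ≤ 1 := by
    intro σ hσ t
    have hyb : 0 ≤ y t ∧ y t ≤ 1 := by
      have hmem := (hP xq).1 hxq.1
      cases t with
      | inl a => exact hmem.1 a
      | inr b => exact hmem.2.1 b
    rcases hbound t with h | h
    · have : |σ * δ t| ≤ r t := by
        rw [abs_mul]
        rw [abs_mul, abs_of_pos hεpos] at h
        refine le_trans ?_ h
        exact mul_le_mul_of_nonneg_right hσ (abs_nonneg _)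
      rw [abs_le] at this
      constructor
      · have := this.1
        have hry : r t ≤ y t := min_le_left _ _
        linarith
      · have := this.2
        have hry : r t ≤ 1 - y t := min_le_right _ _
        linarith
    · rw [h, mul_zero, add_zero]; exact hyb
  -- the two perturbed points
  have hmemP : ∀ (σ : ℝ), |σ| ≤ ε →
      (fun a => xq.1 a + σ * δ (Sum.inl a), fun b => xq.2 b + σ * δ (Sum.inr b)) ∈ P := by
    intro σ hσ
    rw [hP]
    obtain ⟨hb1, hb2, hc1, hc2⟩ := (hP xq).1 hxq.1
    refine ⟨fun a => hbnd σ hσ (Sum.inl a), fun b => hbnd σ hσ (Sum.inr b), ?_, ?_⟩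
    · have e1 : ∑ a, cA a * (xq.1 a + σ * δ (Sum.inl a))
          = ∑ a, cA a * xq.1 a + σ * ∑ a, c (Sum.inl a) * δ (Sum.inl a) := by
        rw [Finset.mul_sum, ← Finset.sum_add_distrib]
        exact Finset.sum_congr rfl (fun a _ => by simp [hc]; ring)
      have e2 : ∑ b, cB b * (xq.2 b + σ * δ (Sum.inr b))
          = ∑ b, cB b * xq.2 b + σ * ∑ b, c (Sum.inr b) * δ (Sum.inr b) := by
        rw [Finset.mul_sum, ← Finset.sum_add_distrib]
        exact Finset.sum_congr rfl (fun b _ => by simp [hc]; ring)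
      have esum : ∑ a, c (Sum.inl a) * δ (Sum.inl a) + ∑ b, c (Sum.inr b) * δ (Sum.inr b)
          = ∑ t, c t * δ t := (Fintype.sum_sum_type (fun t => c t * δ t)).symm
      simp only [e1, e2]
      have : σ * (∑ a, c (Sum.inl a) * δ (Sum.inl a)) + σ * (∑ b, c (Sum.inr b) * δ (Sum.inr b))
          = σ * ∑ t, c t * δ t := by rw [← esum]; ring
      calc ∑ a, cA a * xq.1 a + σ * ∑ a, c (Sum.inl a) * δ (Sum.inl a)
            + (∑ b, cB b * xq.2 b + σ * ∑ b, c (Sum.inr b) * δ (Sum.inr b))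
          = ∑ a, cA a * xq.1 a + ∑ b, cB b * xq.2 b + σ * ∑ t, c t * δ t := by
            rw [← this]; ring
        _ ≤ K1 := by rw [hcrel, mul_zero, add_zero]; exact hc1
    · have e1 : ∑ a, dA a * (xq.1 a + σ * δ (Sum.inl a))
          = ∑ a, dA a * xq.1 a + σ * ∑ a, d (Sum.inl a) * δ (Sum.inl a) := by
        rw [Finset.mul_sum, ← Finset.sum_add_distrib]
        exact Finset.sum_congr rfl (fun a _ => by simp [hd]; ring)
      have e2 : ∑ b, dB b * (xq.2 b + σ * δ (Sum.inr b))
          = ∑ b, dB b * xq.2 b + σ * ∑ b, d (Sum.inr b) * δ (Sum.inr b) := by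
        rw [Finset.mul_sum, ← Finset.sum_add_distrib]
        exact Finset.sum_congr rfl (fun b _ => by simp [hd]; ring)
      have esum : ∑ a, d (Sum.inl a) * δ (Sum.inl a) + ∑ b, d (Sum.inr b) * δ (Sum.inr b)
          = ∑ t, d t * δ t := (Fintype.sum_sum_type (fun t => d t * δ t)).symm
      simp only [e1, e2]
      have : σ * (∑ a, d (Sum.inl a) * δ (Sum.inl a)) + σ * (∑ b, d (Sum.inr b) * δ (Sum.inr b))
          = σ * ∑ t, d t * δ t := by rw [← esum]; ring
      calc ∑ a, dA a * xq.1 a + σ * ∑ a, d (Sum.inl a) * δ (Sum.inl a)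
            + (∑ b, dB b * xq.2 b + σ * ∑ b, d (Sum.inr b) * δ (Sum.inr b))
          = ∑ a, dA a * xq.1 a + ∑ b, dB b * xq.2 b + σ * ∑ t, d t * δ t := by
            rw [← this]; ring
        _ ≤ K2 := by rw [hdrel, mul_zero, add_zero]; exact hc2
  set w1 : (A → ℝ) × (B → ℝ) :=
    (fun a => xq.1 a + ε * δ (Sum.inl a), fun b => xq.2 b + ε * δ (Sum.inr b)) with hw1
  set w2 : (A → ℝ) × (B → ℝ) :=
    (fun a => xq.1 a + (-ε) * δ (Sum.inl a), fun b => xq.2 b + (-ε) * δ (Sum.inr b)) with hw2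
  have hw1P : w1 ∈ P := hmemP ε (by rw [abs_of_pos hεpos])
  have hw2P : w2 ∈ P := hmemP (-ε) (by rw [abs_neg, abs_of_pos hεpos])
  have hseg : xq ∈ openSegment ℝ w1 w2 := by
    refine ⟨1/2, 1/2, by norm_num, by norm_num, by norm_num, ?_⟩
    apply Prod.ext
    · funext a
      simp only [hw1, hw2, Prod.smul_fst, Prod.fst_add, Pi.add_apply, Pi.smul_apply,
        smul_eq_mul]
      ring
    · funext b
      simp only [hw1, hw2, Prod.smul_snd, Prod.snd_add, Pi.add_apply, Pi.smul_apply,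
        smul_eq_mul]
      ring
  have hweq := (mem_extremePoints.1 hxq).2 w1 hw1P w2 hw2P hseg
  -- derive contradiction: w1 ≠ xq
  have hene' : ∃ j : Fin 3, e j ≠ 0 := by
    by_contra h
    push_neg at h
    exact hene (funext h)
  obtain ⟨j, hj⟩ := hene'
  have : ∃ t : A ⊕ B, δ t ≠ 0 := by
    fin_cases j
    · exact ⟨t1, by rw [hδ1]; exact hj⟩
    · exact ⟨t2, by rw [hδ2]; exact hj⟩
    · exact ⟨t3, by rw [hδ3]; exact hj⟩
  obtain ⟨t, ht⟩ := this
  have hεδ : ε * δ t ≠ 0 := mul_ne_zero (ne_of_gt hεpos) ht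
  cases t with
  | inl a =>
    have := congrFun (congrArg Prod.fst hweq.1) a
    simp only [hw1] at this
    exact hεδ (by linarith [this])
  | inr b =>
    have := congrFun (congrArg Prod.snd hweq.1) b
    simp only [hw1] at this
    exact hεδ (by linarith [this])


set_option maxHeartbeats 1000000 in
/-- The rounding step of Lemma 2.7 of the paper: an extreme point of the
two-dimensional covering-knapsack polytope (2C-P), with integral data
`s, u, v, k, M`, can be rounded to an integral feasible point that agrees with
it on all of its `{0,1}`-coordinates (hence differs in at most two
coordinates). -/
theorem stmt_8 {A B : Type*} [Fintype A] [Fintype B]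
    (s u : A → ℕ) (v : B → ℕ) (k M : ℕ)
    (P : Set ((A → ℝ) × (B → ℝ)))
    (hP : P = {xq | (∀ a, 0 ≤ xq.1 a ∧ xq.1 a ≤ 1) ∧
      (∀ b, 0 ≤ xq.2 b ∧ xq.2 b ≤ 1) ∧
      (∑ a, (xq.1 a + (s a : ℝ) * (1 - xq.1 a))) + (∑ b, xq.2 b) ≤ (k : ℝ) ∧
      (∑ a, (1 - xq.1 a) * (u a : ℝ)) + (∑ b, (1 - xq.2 b) * (v b : ℝ)) ≤ (M : ℝ)})
    (xq : (A → ℝ) × (B → ℝ)) (hxq : xq ∈ Set.extremePoints ℝ P) :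
    ∃ (xt : A → ℝ) (qt : B → ℝ),
      (xt, qt) ∈ P ∧
      (∀ a, xt a = 0 ∨ xt a = 1) ∧
      (∀ b, qt b = 0 ∨ qt b = 1) ∧
      (∀ a, (xq.1 a = 0 ∨ xq.1 a = 1) → xt a = xq.1 a) ∧
      (∀ b, (xq.2 b = 0 ∨ xq.2 b = 1) → qt b = xq.2 b) ∧
      {a | xt a ≠ xq.1 a}.ncard + {b | qt b ≠ xq.2 b}.ncard ≤ 2 := by
  classical
  -- rewrite membership in P in linear form
  have hPiff : ∀ w : (A → ℝ) × (B → ℝ), w ∈ P ↔ ((∀ a, 0 ≤ w.1 a ∧ w.1 a ≤ 1) ∧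
      (∀ b, 0 ≤ w.2 b ∧ w.2 b ≤ 1) ∧
      (∑ a, (1 - (s a : ℝ)) * w.1 a) + (∑ b, (1 : ℝ) * w.2 b)
        ≤ (k : ℝ) - ∑ a, (s a : ℝ) ∧
      (∑ a, (-(u a : ℝ)) * w.1 a) + (∑ b, (-(v b : ℝ)) * w.2 b)
        ≤ (M : ℝ) - (∑ a, (u a : ℝ)) - (∑ b, (v b : ℝ))) := by
    intro w
    rw [hP]
    simp only [Set.mem_setOf_eq]
    have e1 : ∑ a, (w.1 a + (s a : ℝ) * (1 - w.1 a))
        = (∑ a, (s a : ℝ)) + ∑ a, (1 - (s a : ℝ)) * w.1 a := by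
      rw [← Finset.sum_add_distrib]
      exact Finset.sum_congr rfl (fun a _ => by ring)
    have e1' : ∑ b, (w.2 b : ℝ) = ∑ b, (1 : ℝ) * w.2 b := by
      exact Finset.sum_congr rfl (fun b _ => by ring)
    have e2 : ∑ a, (1 - w.1 a) * (u a : ℝ)
        = (∑ a, (u a : ℝ)) + ∑ a, (-(u a : ℝ)) * w.1 a := by
      rw [← Finset.sum_add_distrib]
      exact Finset.sum_congr rfl (fun a _ => by ring)
    have e3 : ∑ b, (1 - w.2 b) * (v b : ℝ)
        = (∑ b, (v b : ℝ)) + ∑ b, (-(v b : ℝ)) * w.2 b := by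
      rw [← Finset.sum_add_distrib]
      exact Finset.sum_congr rfl (fun b _ => by ring)
    constructor
    · rintro ⟨hb1, hb2, hc1, hc2⟩
      rw [e1, e1'] at hc1
      rw [e2, e3] at hc2
      exact ⟨hb1, hb2, by linarith, by linarith⟩
    · rintro ⟨hb1, hb2, hc1, hc2⟩
      refine ⟨hb1, hb2, ?_, ?_⟩
      · rw [e1, e1']; linarith
      · rw [e2, e3]; linarith
  -- part 1: at most two fractional coordinates
  have hfrac := frac_bound (fun a => 1 - (s a : ℝ)) (fun a => -(u a : ℝ))
    (fun _ => (1 : ℝ)) (fun b => -(v b : ℝ))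
    ((k : ℝ) - ∑ a, (s a : ℝ)) ((M : ℝ) - (∑ a, (u a : ℝ)) - (∑ b, (v b : ℝ)))
    P hPiff xq hxq
  -- part 2: round
  set y : A ⊕ B → ℝ := Sum.elim xq.1 xq.2 with hy
  obtain ⟨hb1, hb2, hc1, hc2⟩ := (hPiff xq).1 hxq.1
  set c : A ⊕ B → ℤ := Sum.elim (fun a => 1 - (s a : ℤ)) (fun _ => 1) with hcdef
  set d : A ⊕ B → ℕ := Sum.elim u v with hddef
  have hcle : ∀ i, c i ≤ 1 := by
    intro i; cases i with
    | inl a => simp [hcdef]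
    | inr b => simp [hcdef]
  have hy0 : ∀ i, 0 ≤ y i := by
    intro i; cases i with
    | inl a => exact (hb1 a).1
    | inr b => exact (hb2 b).1
  have hy1 : ∀ i, y i ≤ 1 := by
    intro i; cases i with
    | inl a => exact (hb1 a).2
    | inr b => exact (hb2 b).2
  have h1 : ∑ i, (c i : ℝ) * y i ≤ (((k : ℤ) - ∑ a, (s a : ℤ)) : ℤ) := by
    rw [Fintype.sum_sum_type (fun i => (c i : ℝ) * y i)]
    push_cast
    convert le_trans (le_of_eq rfl) hc1 using 2 <;> push_cast
    · rfl
    all_goals ring_nf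
    · exact Finset.sum_congr rfl (fun a _ => by simp [hcdef, hy]; ring)
    · exact Finset.sum_congr rfl (fun b _ => by simp [hcdef, hy])
  have h2 : ((((∑ a, (u a : ℤ)) + (∑ b, (v b : ℤ)) - (M : ℤ)) : ℤ) : ℝ)
      ≤ ∑ i, (d i : ℝ) * y i := by
    rw [Fintype.sum_sum_type (fun i => (d i : ℝ) * y i)]
    push_cast
    have ea : ∑ a, (d (Sum.inl a) : ℝ) * y (Sum.inl a) = ∑ a, (u a : ℝ) * xq.1 a :=
      Finset.sum_congr rfl (fun a _ => by simp [hddef, hy])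
    have eb : ∑ b, (d (Sum.inr b) : ℝ) * y (Sum.inr b) = ∑ b, (v b : ℝ) * xq.2 b :=
      Finset.sum_congr rfl (fun b _ => by simp [hddef, hy])
    rw [ea, eb]
    have ha : ∑ a, (-(u a : ℝ)) * xq.1 a = -∑ a, (u a : ℝ) * xq.1 a := by
      rw [← Finset.sum_neg_distrib]
      exact Finset.sum_congr rfl (fun a _ => by ring)
    have hb : ∑ b, (-(v b : ℝ)) * xq.2 b = -∑ b, (v b : ℝ) * xq.2 b := by
      rw [← Finset.sum_neg_distrib]
      exact Finset.sum_congr rfl (fun b _ => by ring)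
    rw [ha, hb] at hc2
    linarith
  obtain ⟨z, hz01, hzagree, hzc1, hzc2⟩ :=
    round_key c d ((k : ℤ) - ∑ a, (s a : ℤ)) ((∑ a, (u a : ℤ)) + (∑ b, (v b : ℤ)) - (M : ℤ))
      hcle y hy0 hy1 h1 h2 hfrac
  refine ⟨fun a => z (Sum.inl a), fun b => z (Sum.inr b), ?_, fun a => hz01 (Sum.inl a),
    fun b => hz01 (Sum.inr b), ?_, ?_, ?_⟩
  · -- membership in P
    rw [hPiff]
    dsimp only
    refine ⟨?_, ?_, ?_, ?_⟩
    · intro a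
      rcases hz01 (Sum.inl a) with h | h <;> rw [h] <;> norm_num
    · intro b
      rcases hz01 (Sum.inr b) with h | h <;> rw [h] <;> norm_num
    · -- constraint 1
      have := hzc1
      rw [Fintype.sum_sum_type (fun i => (c i : ℝ) * z i)] at this
      push_cast at this
      have ea : ∑ a, (c (Sum.inl a) : ℝ) * z (Sum.inl a)
          = ∑ a, (1 - (s a : ℝ)) * z (Sum.inl a) :=
        Finset.sum_congr rfl (fun a _ => by simp [hcdef])
      have eb : ∑ b, (c (Sum.inr b) : ℝ) * z (Sum.inr b)
          = ∑ b, (1 : ℝ) * z (Sum.inr b) :=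
        Finset.sum_congr rfl (fun b _ => by simp [hcdef])
      rw [ea, eb] at this
      exact le_trans (le_of_eq rfl) this
    · -- constraint 2
      have := hzc2
      rw [Fintype.sum_sum_type (fun i => (d i : ℝ) * z i)] at this
      push_cast at this
      have ea : ∑ a, (d (Sum.inl a) : ℝ) * z (Sum.inl a) = ∑ a, (u a : ℝ) * z (Sum.inl a) :=
        Finset.sum_congr rfl (fun a _ => by simp [hddef])
      have eb : ∑ b, (d (Sum.inr b) : ℝ) * z (Sum.inr b) = ∑ b, (v b : ℝ) * z (Sum.inr b) :=
        Finset.sum_congr rfl (fun b _ => by simp [hddef])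
      rw [ea, eb] at this
      have ha : ∑ a, (-(u a : ℝ)) * z (Sum.inl a) = -∑ a, (u a : ℝ) * z (Sum.inl a) := by
        rw [← Finset.sum_neg_distrib]
        exact Finset.sum_congr rfl (fun a _ => by ring)
      have hb : ∑ b, (-(v b : ℝ)) * z (Sum.inr b) = -∑ b, (v b : ℝ) * z (Sum.inr b) := by
        rw [← Finset.sum_neg_distrib]
        exact Finset.sum_congr rfl (fun b _ => by ring)
      rw [ha, hb]
      linarith
  · -- agreement on A
    intro a ha
    have : y (Sum.inl a) = 0 ∨ y (Sum.inl a) = 1 := by simpa [hy] using ha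
    have := hzagree (Sum.inl a) this
    simpa [hy] using this
  · -- agreement on B
    intro b hb
    have : y (Sum.inr b) = 0 ∨ y (Sum.inr b) = 1 := by simpa [hy] using hb
    have := hzagree (Sum.inr b) this
    simpa [hy] using this
  · -- at most two changes
    show {a | z (Sum.inl a) ≠ xq.1 a}.ncard + {b | z (Sum.inr b) ≠ xq.2 b}.ncard ≤ 2
    have hsplit := ncard_sum_split (fun t => ¬(y t = 0 ∨ y t = 1))
    simp only [hy, Sum.elim_inl, Sum.elim_inr] at hsplit
    have hfrac' : {a | ¬(xq.1 a = 0 ∨ xq.1 a = 1)}.ncard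
        + {b | ¬(xq.2 b = 0 ∨ xq.2 b = 1)}.ncard ≤ 2 := by
      rw [← hsplit]
      rw [hy] at hfrac
      exact hfrac
    have hsub1 : {a | z (Sum.inl a) ≠ xq.1 a} ⊆ {a | ¬(xq.1 a = 0 ∨ xq.1 a = 1)} := by
      intro a ha h
      apply ha
      have : y (Sum.inl a) = 0 ∨ y (Sum.inl a) = 1 := by simpa [hy] using h
      simpa [hy] using hzagree (Sum.inl a) this
    have hsub2 : {b | z (Sum.inr b) ≠ xq.2 b} ⊆ {b | ¬(xq.2 b = 0 ∨ xq.2 b = 1)} := by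
      intro b hb h
      apply hb
      have : y (Sum.inr b) = 0 ∨ y (Sum.inr b) = 1 := by simpa [hy] using h
      simpa [hy] using hzagree (Sum.inr b) this
    have h1' := Set.ncard_le_ncard hsub1 (Set.toFinite _)
    have h2' := Set.ncard_le_ncard hsub2 (Set.toFinite _)
    omega
end

section
/- Suppose there exist S* ⊆ 𝓕 with |S*| ≤ k and σ* : 𝓓 → S* such that every client j ∈ 𝓓 is adjacent to σ*(j) and |σ*⁻¹(i)| ≥ L_i for all i ∈ S* (a feasible distance-1 assignment with no outliers). Let Γ ⊆ 𝓓 be maximal under inclusion among sets of clients with pairwise graph-distance at least 3, and for each j ∈ Γ choose i_j ∈ N(j) with L_{i_j} ≤ L_i for all i ∈ N(j); set F := {i_j : j ∈ Γ}. Then |Γ| ≤ k, and there exists σ : 𝓓 → F with dist(j, σ(j)) ≤ 3 for every j ∈ 𝓓 and |σ⁻¹(i)| ≥ L_i for every i ∈ F. -/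
/-- Lemma 3.3 of the paper, underlying the 3-approximation for lower-bounded
`k`-supplier: given a feasible distance-1 assignment `(S*, σ*)` with no
outliers in the bipartite graph `G` (clients `𝓓`, facilities `𝓕`), a maximal
set `Γ` of clients at pairwise distance ≥ 3, and for each `j ∈ Γ` a neighbor
`isel j` of minimum lower bound, the set `F = isel(Γ)` satisfies `|Γ| ≤ k` and
admits a feasible distance-3 assignment.  Graph distances are measured by
`SimpleGraph.edist` (so that unreachable vertices are at distance `⊤`). -/
theorem stmt_9 {V : Type*} [Fintype V] [DecidableEq V]
    (G : SimpleGraph V) [DecidableRel G.Adj]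
    (𝓓 𝓕 : Finset V) (hdisj : Disjoint 𝓓 𝓕)
    (hbip : ∀ u v, G.Adj u v → (u ∈ 𝓓 ∧ v ∈ 𝓕) ∨ (u ∈ 𝓕 ∧ v ∈ 𝓓))
    (L : V → ℕ) (k : ℕ)
    (Sstar : Finset V) (σstar : V → V)
    (hSsub : Sstar ⊆ 𝓕) (hScard : Sstar.card ≤ k)
    (hσadj : ∀ j ∈ 𝓓, σstar j ∈ Sstar ∧ G.Adj j (σstar j))
    (hσlb : ∀ i ∈ Sstar, L i ≤ (𝓓.filter fun j => σstar j = i).card)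
    (Γ : Finset V) (hΓsub : Γ ⊆ 𝓓)
    (hΓsep : ∀ j ∈ Γ, ∀ j' ∈ Γ, j ≠ j' → 3 ≤ G.edist j j')
    (hΓmax : ∀ j ∈ 𝓓, j ∉ Γ → ∃ j' ∈ Γ, G.edist j j' < 3)
    (isel : V → V)
    (hisel : ∀ j ∈ Γ, isel j ∈ G.neighborFinset j ∧
      ∀ i ∈ G.neighborFinset j, L (isel j) ≤ L i) :
    Γ.card ≤ k ∧
    ∃ σ : V → V,
      (∀ j ∈ 𝓓, σ j ∈ Γ.image isel ∧ G.edist j (σ j) ≤ 3) ∧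
      (∀ i ∈ Γ.image isel, L i ≤ (𝓓.filter fun j => σ j = i).card) := by
  classical
  -- adjacency gives edist ≤ 1
  have hadj1 : ∀ {u v : V}, G.Adj u v → G.edist u v ≤ 1 := fun h =>
    le_of_eq (SimpleGraph.edist_eq_one_iff_adj.mpr h)
  -- σstar is injective on Γ
  have hinj : ∀ j ∈ Γ, ∀ j' ∈ Γ, σstar j = σstar j' → j = j' := by
    intro j hj j' hj' he
    by_contra hne
    have h3 := hΓsep j hj j' hj' hne
    have h1 : G.edist j (σstar j) ≤ 1 := hadj1 (hσadj j (hΓsub hj)).2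
    have h2 : G.edist (σstar j) j' ≤ 1 := by
      rw [SimpleGraph.edist_comm, he]
      exact hadj1 (hσadj j' (hΓsub hj')).2
    have : G.edist j j' ≤ 2 := le_trans (SimpleGraph.edist_triangle (v := σstar j))
      (by calc G.edist j (σstar j) + G.edist (σstar j) j' ≤ 1 + 1 := add_le_add h1 h2
            _ = 2 := by norm_num)
    have : (3 : ℕ∞) ≤ 2 := le_trans h3 this
    norm_num at this
  -- isel is injective on Γ
  have hiselinj : ∀ j ∈ Γ, ∀ j' ∈ Γ, isel j = isel j' → j = j' := by
    intro j hj j' hj' he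
    by_contra hne
    have h3 := hΓsep j hj j' hj' hne
    have h1 : G.edist j (isel j) ≤ 1 :=
      hadj1 ((SimpleGraph.mem_neighborFinset _ _ _).mp (hisel j hj).1)
    have h2 : G.edist (isel j) j' ≤ 1 := by
      rw [SimpleGraph.edist_comm, he]
      exact hadj1 ((SimpleGraph.mem_neighborFinset _ _ _).mp (hisel j' hj').1)
    have : G.edist j j' ≤ 2 := le_trans (SimpleGraph.edist_triangle (v := isel j))
      (by calc G.edist j (isel j) + G.edist (isel j) j' ≤ 1 + 1 := add_le_add h1 h2
            _ = 2 := by norm_num)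
    have : (3 : ℕ∞) ≤ 2 := le_trans h3 this
    norm_num at this
  constructor
  · -- |Γ| ≤ k
    calc Γ.card = (Γ.image σstar).card := by
          rw [Finset.card_image_of_injOn]
          intro a ha b hb; exact hinj a ha b hb
      _ ≤ Sstar.card := Finset.card_le_card (by
          intro x hx
          obtain ⟨j, hj, rfl⟩ := Finset.mem_image.mp hx
          exact (hσadj j (hΓsub hj)).1)
      _ ≤ k := hScard
  · -- the assignment
    set γ : V → V := fun j =>
      if h : ∃ j₀ ∈ Γ, σstar j₀ = σstar j then h.choose
      else if h' : ∃ j' ∈ Γ, G.edist j j' < 3 then h'.choose else j with hγdef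
    refine ⟨fun j => isel (γ j), ?_, ?_⟩
    · intro j hj
      have hγmem : γ j ∈ Γ ∧ G.edist j (γ j) ≤ 2 := by
        by_cases h : ∃ j₀ ∈ Γ, σstar j₀ = σstar j
        · simp only [hγdef, dif_pos h]
          obtain ⟨hmem, heq⟩ := h.choose_spec
          set j₁ := h.choose with hj₁
          refine ⟨hmem, ?_⟩
          have h1 : G.edist j (σstar j) ≤ 1 := hadj1 (hσadj j hj).2
          have h2 : G.edist (σstar j) j₁ ≤ 1 := by
            rw [SimpleGraph.edist_comm, ← heq]
            exact hadj1 (hσadj _ (hΓsub hmem)).2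
          calc G.edist j j₁ ≤ _ + _ := SimpleGraph.edist_triangle (v := σstar j)
            _ ≤ 1 + 1 := add_le_add h1 h2
            _ = 2 := by norm_num
        · have hjΓ : j ∉ Γ := fun hjΓ => h ⟨j, hjΓ, rfl⟩
          have h' : ∃ j' ∈ Γ, G.edist j j' < 3 := hΓmax j hj hjΓ
          simp only [hγdef, dif_neg h, dif_pos h']
          obtain ⟨hmem, hlt⟩ := h'.choose_spec
          refine ⟨hmem, ?_⟩
          have : G.edist j h'.choose ≠ ⊤ := by
            intro he; rw [he] at hlt; exact (not_top_lt hlt)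
          lift G.edist j h'.choose to ℕ using this with n hn
          have : n < 3 := by exact_mod_cast hlt
          exact_mod_cast Nat.lt_succ_iff.mp this
      refine ⟨Finset.mem_image.mpr ⟨γ j, hγmem.1, rfl⟩, ?_⟩
      have h1 : G.edist (γ j) (isel (γ j)) ≤ 1 :=
        hadj1 ((SimpleGraph.mem_neighborFinset _ _ _).mp (hisel _ hγmem.1).1)
      calc G.edist j (isel (γ j)) ≤ _ + _ := SimpleGraph.edist_triangle (v := γ j)
        _ ≤ 2 + 1 := add_le_add hγmem.2 h1
        _ = 3 := by norm_num
    · intro i hi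
      obtain ⟨j₀, hj₀, rfl⟩ := Finset.mem_image.mp hi
      have hadjj₀ : G.Adj j₀ (σstar j₀) := (hσadj j₀ (hΓsub hj₀)).2
      have hLle : L (isel j₀) ≤ L (σstar j₀) :=
        (hisel j₀ hj₀).2 _ ((SimpleGraph.mem_neighborFinset _ _ _).mpr hadjj₀)
      have hsub : (𝓓.filter fun j => σstar j = σstar j₀) ⊆
          (𝓓.filter fun j => isel (γ j) = isel j₀) := by
        intro j hjmem
        rw [Finset.mem_filter] at hjmem ⊢
        obtain ⟨hjD, hje⟩ := hjmem
        refine ⟨hjD, ?_⟩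
        have h : ∃ jj ∈ Γ, σstar jj = σstar j := ⟨j₀, hj₀, hje.symm⟩
        have hγ : γ j = h.choose := by simp only [hγdef, dif_pos h]
        obtain ⟨hmem, heq⟩ := h.choose_spec
        have : h.choose = j₀ := hinj _ hmem _ hj₀ (by rw [heq, hje])
        rw [hγ, this]
      calc L (isel j₀) ≤ L (σstar j₀) := hLle
        _ ≤ (𝓓.filter fun j => σstar j = σstar j₀).card :=
            hσlb _ (hσadj j₀ (hΓsub hj₀)).1
        _ ≤ _ := Finset.card_le_card hsub
end

section
/- Let F ⊆ 𝓕 be a pre-skeleton, let U := {i ∈ 𝓕 : dist(i, F) ≥ 6}, suppose U ≠ ∅, and let i ∈ U satisfy |N(i)| ≥ |N(i')| for all i' ∈ U. Then F is a skeleton, or F ∪ {i} is a pre-skeleton. -/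
variable {V : Type*}

/-- A feasible distance-1 assignment in the bipartite graph `G` with clients
`𝓓`, facilities `𝓕`, lower bounds `L`, and bounds `k` (centers) and `m`
(outliers): `Fstar ⊆ 𝓕` with `|Fstar| ≤ k`, every client is assigned to an
adjacent center of `Fstar` or designated an outlier (`none`), each center of
`Fstar` serves at least `L i` clients, and at most `m` clients are outliers. -/
def FeasibleDist1Assign [Fintype V] [DecidableEq V] (G : SimpleGraph V)
    (𝓓 𝓕 : Finset V) (L : V → ℕ) (k m : ℕ)
    (Fstar : Finset V) (σ : V → Option V) : Prop :=
  Fstar ⊆ 𝓕 ∧ Fstar.card ≤ k ∧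
  (∀ j ∈ 𝓓, ∀ i, σ j = some i → i ∈ Fstar ∧ G.Adj j i) ∧
  (∀ i ∈ Fstar, L i ≤ (𝓓.filter fun j => σ j = some i).card) ∧
  (𝓓.filter fun j => σ j = none).card ≤ m

/-- Separation property: the vertices of `F` are at pairwise distance ≥ 6. -/
def SeparationProp (G : SimpleGraph V) (F : Finset V) : Prop :=
  ∀ i ∈ F, ∀ i' ∈ F, i ≠ i' → 6 ≤ G.edist i i'

/-- Covering property of `F` with respect to `Fstar`: every `i* ∈ Fstar` is at
distance at most 4 from `F`. -/
def CoveringProp (G : SimpleGraph V) (F Fstar : Finset V) : Prop :=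
  ∀ istar ∈ Fstar, ∃ i ∈ F, G.edist istar i ≤ 4

/-- Injection property of `F` with respect to `Fstar`: there is a map
`f : F → Fstar` with `dist(i, f i) ≤ 2` for all `i ∈ F`. -/
def InjectionProp (G : SimpleGraph V) (F Fstar : Finset V) : Prop :=
  ∃ f : V → V, ∀ i ∈ F, f i ∈ Fstar ∧ G.edist i (f i) ≤ 2

/-- `F` is a pre-skeleton: it satisfies separation, and the injection property
with respect to some feasible distance-1 assignment. -/
def IsPreSkeleton [Fintype V] [DecidableEq V] (G : SimpleGraph V)
    (𝓓 𝓕 : Finset V) (L : V → ℕ) (k m : ℕ) (F : Finset V) : Prop :=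
  SeparationProp G F ∧
  ∃ Fstar σ, FeasibleDist1Assign G 𝓓 𝓕 L k m Fstar σ ∧ InjectionProp G F Fstar

/-- `F` is a skeleton: it satisfies separation, and both the covering and the
injection properties with respect to some feasible distance-1 assignment. -/
def IsSkeleton [Fintype V] [DecidableEq V] (G : SimpleGraph V)
    (𝓓 𝓕 : Finset V) (L : V → ℕ) (k m : ℕ) (F : Finset V) : Prop :=
  SeparationProp G F ∧
  ∃ Fstar σ, FeasibleDist1Assign G 𝓓 𝓕 L k m Fstar σ ∧
    CoveringProp G F Fstar ∧ InjectionProp G F Fstar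

lemma walk_parity (G : SimpleGraph V) (𝓓 𝓕 : Finset V) (hdisj : Disjoint 𝓓 𝓕)
    (hbip : ∀ u v, G.Adj u v → (u ∈ 𝓓 ∧ v ∈ 𝓕) ∨ (u ∈ 𝓕 ∧ v ∈ 𝓓)) :
    ∀ {u v : V} (w : G.Walk u v),
      (u ∈ 𝓕 → v ∈ 𝓕 → Even w.length) ∧ (u ∈ 𝓓 → v ∈ 𝓕 → Odd w.length) := by
  intro u v w
  induction w with
  | nil =>
    refine ⟨fun _ _ => ⟨0, rfl⟩, fun hu hv => ?_⟩
    exact absurd hv (Finset.disjoint_left.mp hdisj hu)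
  | cons h w ih =>
    rename_i a b c
    constructor
    · intro ha hc
      have hb : b ∈ 𝓓 := by
        rcases hbip a b h with ⟨ha', _⟩ | ⟨_, hb⟩
        · exact absurd ha (Finset.disjoint_left.mp hdisj ha')
        · exact hb
      have hodd := ih.2 hb hc
      rw [SimpleGraph.Walk.length_cons]
      rcases hodd with ⟨t, ht⟩
      exact ⟨t + 1, by omega⟩
    · intro ha hc
      have hb : b ∈ 𝓕 := by
        rcases hbip a b h with ⟨_, hb⟩ | ⟨ha', _⟩
        · exact hb
        · exact absurd ha' (Finset.disjoint_left.mp hdisj ha)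
      have heven := ih.1 hb hc
      rw [SimpleGraph.Walk.length_cons]
      rcases heven with ⟨t, ht⟩
      exact ⟨t, by omega⟩

lemma edist_six_of_five (G : SimpleGraph V) (𝓓 𝓕 : Finset V) (hdisj : Disjoint 𝓓 𝓕)
    (hbip : ∀ u v, G.Adj u v → (u ∈ 𝓓 ∧ v ∈ 𝓕) ∨ (u ∈ 𝓕 ∧ v ∈ 𝓓))
    {u v : V} (hu : u ∈ 𝓕) (hv : v ∈ 𝓕) (h : ¬ G.edist u v ≤ 4) :
    6 ≤ G.edist u v := by
  by_cases htop : G.edist u v = ⊤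
  · simp [htop]
  · have hr : G.Reachable u v := SimpleGraph.reachable_of_edist_ne_top htop
    obtain ⟨w, hw⟩ := hr.exists_walk_length_eq_edist
    have heven : Even w.length := (walk_parity G 𝓓 𝓕 hdisj hbip w).1 hu hv
    have h5 : ¬ (w.length : ℕ∞) ≤ 4 := by rw [hw]; exact h
    have h5' : ¬ w.length ≤ 4 := by
      intro hle
      exact h5 (by exact_mod_cast hle)
    have h6 : 6 ≤ w.length := by
      rcases heven with ⟨t, ht⟩
      omega
    rw [← hw]
    exact_mod_cast h6

/-- Lemma 3.4 of the paper: if `F` is a pre-skeleton and `i` is a vertex of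
maximum degree among `U = {i ∈ 𝓕 : dist(i, F) ≥ 6}` (assumed nonempty), then
either `F` is a skeleton or `F ∪ {i}` is a pre-skeleton. -/
theorem stmt_10 {V : Type*} [Fintype V] [DecidableEq V]
    (G : SimpleGraph V) [DecidableRel G.Adj]
    (𝓓 𝓕 : Finset V) (hdisj : Disjoint 𝓓 𝓕)
    (hbip : ∀ u v, G.Adj u v → (u ∈ 𝓓 ∧ v ∈ 𝓕) ∨ (u ∈ 𝓕 ∧ v ∈ 𝓓))
    (L : V → ℕ) (hL : ∀ i ∈ 𝓕, L i ≤ (G.neighborFinset i).card)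
    (k m : ℕ)
    (F : Finset V) (hFsub : F ⊆ 𝓕)
    (hpre : IsPreSkeleton G 𝓓 𝓕 L k m F)
    (U : Finset V)
    (hU : U = 𝓕.filter fun i => ∀ i' ∈ F, 6 ≤ G.edist i i')
    (i : V) (hiU : i ∈ U)
    (himax : ∀ i' ∈ U, (G.neighborFinset i').card ≤ (G.neighborFinset i).card) :
    IsSkeleton G 𝓓 𝓕 L k m F ∨ IsPreSkeleton G 𝓓 𝓕 L k m (insert i F) := by
  obtain ⟨hsep, Fstar, σ, hfeas, f, hf⟩ := hpre
  obtain ⟨hsub, hcard, hadj, hlb, hout⟩ := hfeas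
  by_cases hcov : CoveringProp G F Fstar
  · exact Or.inl ⟨hsep, Fstar, σ, ⟨hsub, hcard, hadj, hlb, hout⟩, hcov, f, hf⟩
  right
  -- basic facts about i
  have hiU' := hiU
  rw [hU, Finset.mem_filter] at hiU'
  obtain ⟨hi𝓕, hifar⟩ := hiU'
  have hiF : i ∉ F := by
    intro h
    have := hifar i h
    simp [SimpleGraph.edist_self] at this
  have hsep' : SeparationProp G (insert i F) := by
    intro a ha b hb hab
    rcases Finset.mem_insert.mp ha with rfl | ha
    · rcases Finset.mem_insert.mp hb with rfl | hb
      · exact absurd rfl hab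
      · exact hifar b hb
    · rcases Finset.mem_insert.mp hb with hbi | hb
      · rw [hbi, SimpleGraph.edist_comm]
        exact hifar a ha
      · exact hsep a ha b hb hab
  -- neighbors of i are clients
  have hNi𝓓 : ∀ j, G.Adj i j → j ∈ 𝓓 := by
    intro j hj
    rcases hbip i j hj with ⟨hi', _⟩ | ⟨_, hj'⟩
    · exact absurd hi𝓕 (Finset.disjoint_left.mp hdisj hi')
    · exact hj'
  by_cases hD : ∃ i'' ∈ Fstar, G.edist i i'' ≤ 2
  · -- easy case: a center near i exists; keep the assignment
    obtain ⟨i'', hi''F, hd⟩ := hD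
    refine ⟨hsep', Fstar, σ, ⟨hsub, hcard, hadj, hlb, hout⟩,
      fun x => if x = i then i'' else f x, ?_⟩
    intro x hx
    rcases Finset.mem_insert.mp hx with rfl | hx
    · simp [hi''F, hd]
    · have hxi : x ≠ i := fun h => hiF (h ▸ hx)
      simpa [hxi] using hf x hx
  · -- hard case
    push_neg at hD
    -- there is an uncovered center istar
    rw [CoveringProp] at hcov
    push_neg at hcov
    obtain ⟨istar, histar, hfar4⟩ := hcov
    have histar𝓕 : istar ∈ 𝓕 := hsub histar
    have histarU : istar ∈ U := by
      rw [hU, Finset.mem_filter]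
      refine ⟨histar𝓕, fun x hx => ?_⟩
      exact edist_six_of_five G 𝓓 𝓕 hdisj hbip histar𝓕 (hFsub hx)
        (by intro hle; exact absurd hle (by simpa using hfar4 x hx))
    have hiNotFstar : i ∉ Fstar := by
      intro h
      have := hD i h
      simp [SimpleGraph.edist_self] at this
    have hineistar : i ≠ istar := fun h => hiNotFstar (h ▸ histar)
    -- every neighbor of i is an outlier
    have hNiout : ∀ j, G.Adj i j → σ j = none := by
      intro j hj
      cases hσj : σ j with
      | none => rfl
      | some i'' =>
        have hj𝓓 := hNi𝓓 j hj
        obtain ⟨hi''F, hadj'⟩ := hadj j hj𝓓 i'' hσj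
        have h1 : G.edist i j ≤ 1 := le_of_eq (SimpleGraph.edist_eq_one_iff_adj.mpr hj)
        have h2 : G.edist j i'' ≤ 1 := le_of_eq (SimpleGraph.edist_eq_one_iff_adj.mpr hadj')
        have : G.edist i i'' ≤ 2 := le_trans (SimpleGraph.edist_triangle)
          (by calc G.edist i j + G.edist j i'' ≤ 1 + 1 := add_le_add h1 h2
                _ = 2 := by norm_num)
        exact absurd this (not_le.mpr (hD i'' hi''F))
    -- the new assignment
    set σ' : V → Option V := fun j =>
      if G.Adj i j then some i else if σ j = some istar then none else σ j with hσ'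
    set Ni := G.neighborFinset i with hNi
    have hNisub : Ni ⊆ 𝓓.filter (fun j => σ j = none) := by
      intro j hj
      rw [hNi, SimpleGraph.mem_neighborFinset] at hj
      exact Finset.mem_filter.mpr ⟨hNi𝓓 j hj, hNiout j hj⟩
    refine ⟨hsep', insert i (Fstar.erase istar), σ', ⟨?_, ?_, ?_, ?_, ?_⟩,
      fun x => if x = i then i else f x, ?_⟩
    · -- subset of 𝓕
      intro x hx
      rcases Finset.mem_insert.mp hx with rfl | hx
      · exact hi𝓕
      · exact hsub (Finset.mem_of_mem_erase hx)
    · -- cardinality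
      calc (insert i (Fstar.erase istar)).card ≤ (Fstar.erase istar).card + 1 :=
            Finset.card_insert_le _ _
        _ = Fstar.card - 1 + 1 := by rw [Finset.card_erase_of_mem histar]
        _ ≤ Fstar.card := by
            have : 1 ≤ Fstar.card := Finset.card_pos.mpr ⟨istar, histar⟩
            omega
        _ ≤ k := hcard
    · -- assignment validity
      intro j hj i'' hσ'j
      by_cases hadjij : G.Adj i j
      · have : some i = some i'' := by rw [← hσ'j]; simp [hσ', hadjij]
        have hii : i = i'' := by injection this
        exact ⟨hii ▸ Finset.mem_insert_self i _, hii ▸ hadjij.symm⟩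
      · have hne : σ j ≠ some istar := by
          intro h
          rw [hσ'] at hσ'j
          simp [hadjij, h] at hσ'j
        have hσj : σ j = some i'' := by
          rw [hσ'] at hσ'j
          simpa [hadjij, hne] using hσ'j
        obtain ⟨hmem, hadj'⟩ := hadj j hj i'' hσj
        refine ⟨Finset.mem_insert_of_mem (Finset.mem_erase.mpr ⟨?_, hmem⟩), hadj'⟩
        intro h
        exact hne (h ▸ hσj)
    · -- lower bounds
      intro i'' hi''
      rcases Finset.mem_insert.mp hi'' with rfl | hi''
      · -- center i
        have hsubset : Ni ⊆ 𝓓.filter (fun j => σ' j = some i'') := by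
          intro j hj
          rw [hNi, SimpleGraph.mem_neighborFinset] at hj
          exact Finset.mem_filter.mpr ⟨hNi𝓓 j hj, by simp [hσ', hj]⟩
        exact le_trans (hL i'' hi𝓕) (Finset.card_le_card hsubset)
      · obtain ⟨hne, hmem⟩ := Finset.mem_erase.mp hi''
        have hsubset : 𝓓.filter (fun j => σ j = some i'') ⊆
            𝓓.filter (fun j => σ' j = some i'') := by
          intro j hj
          obtain ⟨hj𝓓, hσj⟩ := Finset.mem_filter.mp hj
          have hnadj : ¬ G.Adj i j := by
            intro hadjij
            rw [hNiout j hadjij] at hσj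
            exact nomatch hσj
          have hneistar : σ j ≠ some istar := by
            rw [hσj]; intro h; exact hne (by injection h)
          exact Finset.mem_filter.mpr ⟨hj𝓓, by simp [hσ', hnadj, hneistar, hσj, hne]⟩
        exact le_trans (hlb i'' hmem) (Finset.card_le_card hsubset)
    · -- outlier bound
      set O := 𝓓.filter (fun j => σ j = none) with hO
      set A := 𝓓.filter (fun j => σ j = some istar) with hA
      have hsubset : 𝓓.filter (fun j => σ' j = none) ⊆ (O \ Ni) ∪ A := by
        intro j hj
        obtain ⟨hj𝓓, hσ'j⟩ := Finset.mem_filter.mp hj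
        have hnadj : ¬ G.Adj i j := by
          intro hadjij
          simp [hσ', hadjij] at hσ'j
        by_cases hjistar : σ j = some istar
        · exact Finset.mem_union_right _ (Finset.mem_filter.mpr ⟨hj𝓓, hjistar⟩)
        · have hσj : σ j = none := by
            rw [hσ'] at hσ'j
            simpa [hnadj, hjistar] using hσ'j
          refine Finset.mem_union_left _ (Finset.mem_sdiff.mpr
            ⟨Finset.mem_filter.mpr ⟨hj𝓓, hσj⟩, ?_⟩)
          rw [hNi, SimpleGraph.mem_neighborFinset]
          exact fun h => hnadj h
      have hAsub : A ⊆ G.neighborFinset istar := by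
        intro j hj
        obtain ⟨hj𝓓, hσj⟩ := Finset.mem_filter.mp hj
        rw [SimpleGraph.mem_neighborFinset]
        exact (hadj j hj𝓓 istar hσj).2.symm
      have hAcard : A.card ≤ Ni.card :=
        le_trans (Finset.card_le_card hAsub) (himax istar histarU)
      have hNiO : Ni ⊆ O := hNisub
      have hcard1 : (O \ Ni).card = O.card - Ni.card := Finset.card_sdiff_of_subset hNiO
      have hNileO : Ni.card ≤ O.card := Finset.card_le_card hNiO
      calc (𝓓.filter fun j => σ' j = none).card ≤ ((O \ Ni) ∪ A).card :=
            Finset.card_le_card hsubset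
        _ ≤ (O \ Ni).card + A.card := Finset.card_union_le _ _
        _ ≤ O.card := by omega
        _ ≤ m := hout
    · -- injection
      intro x hx
      rcases Finset.mem_insert.mp hx with rfl | hx
      · simp [Finset.mem_insert_self, SimpleGraph.edist_self]
      · have hxi : x ≠ i := fun h => hiF (h ▸ hx)
        obtain ⟨hfx, hdx⟩ := hf x hx
        have hfxne : f x ≠ istar := by
          intro h
          refine absurd (show G.edist istar x ≤ 4 by
            rw [SimpleGraph.edist_comm, ← h]
            exact le_trans hdx (by norm_num)) (not_le.mpr (hfar4 x hx))
        refine ⟨?_, by simpa [hxi] using hdx⟩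
        simp only [hxi, if_neg]
        exact Finset.mem_insert_of_mem (Finset.mem_erase.mpr ⟨hfxne, hfx⟩)
end

section
/- If F ⊆ 𝓕 is a skeleton, then |F| ≤ k and there exists σ : 𝓓 → F ∪ {out} such that dist(j, σ(j)) ≤ 5 for every client j with σ(j) ≠ out, |σ⁻¹(i)| ≥ L_i for every i ∈ F, and |σ⁻¹(out)| ≤ m (i.e., F admits a feasible distance-5 assignment). -/
variable {V : Type*}

/-- The paper's observation after Definition 3.4: a skeleton `F` has at most
`k` centers and admits a feasible distance-5 assignment. -/
theorem stmt_11 {V : Type*} [Fintype V] [DecidableEq V]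
    (G : SimpleGraph V) [DecidableRel G.Adj]
    (𝓓 𝓕 : Finset V) (hdisj : Disjoint 𝓓 𝓕)
    (hbip : ∀ u v, G.Adj u v → (u ∈ 𝓓 ∧ v ∈ 𝓕) ∨ (u ∈ 𝓕 ∧ v ∈ 𝓓))
    (L : V → ℕ) (hL : ∀ i ∈ 𝓕, L i ≤ (G.neighborFinset i).card)
    (k m : ℕ)
    (F : Finset V) (hFsub : F ⊆ 𝓕)
    (hskel : IsSkeleton G 𝓓 𝓕 L k m F) :
    F.card ≤ k ∧
    ∃ σ : V → Option V,
      (∀ j ∈ 𝓓, ∀ i, σ j = some i → i ∈ F ∧ G.edist j i ≤ 5) ∧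
      (∀ i ∈ F, L i ≤ (𝓓.filter fun j => σ j = some i).card) ∧
      (𝓓.filter fun j => σ j = none).card ≤ m := by
  classical
  obtain ⟨hsep, Fstar, σs, ⟨hFssub, hFscard, hadj, hlow, hout⟩, hcov, f, hf⟩ := hskel
  have hne4 : ¬ ((6:ℕ∞) ≤ 4) := by norm_num
  constructor
  · calc F.card ≤ Fstar.card := by
          apply Finset.card_le_card_of_injOn f (fun i hi => (hf i hi).1)
          intro i hi i' hi' heq
          by_contra hne
          refine hne4 (le_trans (hsep i hi i' hi' hne) ?_)
          calc G.edist i i' ≤ G.edist i (f i) + G.edist (f i) i' := G.edist_triangle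
            _ ≤ 2 + 2 := by
                gcongr
                · exact (hf i hi).2
                · rw [heq, SimpleGraph.edist_comm]; exact (hf i' hi').2
            _ = 4 := by norm_num
      _ ≤ k := hFscard
  · set g : V → V := fun i0 => if h : ∃ i ∈ F, G.edist i0 i ≤ 4 then h.choose else i0 with hg
    set σ : V → Option V := fun j =>
      if h : ∃ i ∈ F, G.Adj j i then some h.choose else Option.map g (σs j) with hσ
    refine ⟨σ, ?_, ?_, ?_⟩
    · intro j hj i hi
      rw [hσ] at hi
      simp only at hi
      by_cases h : ∃ i ∈ F, G.Adj j i
      · rw [dif_pos h] at hi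
        obtain ⟨hmem, hadj'⟩ := h.choose_spec
        rw [Option.some_inj] at hi
        rw [hi] at hmem hadj'
        refine ⟨hmem, ?_⟩
        calc G.edist j i = 1 := SimpleGraph.edist_eq_one_iff_adj.mpr hadj'
          _ ≤ 5 := by norm_num
      · rw [dif_neg h] at hi
        obtain ⟨istar, hist, hgi⟩ := Option.map_eq_some_iff.mp hi
        obtain ⟨histar, hadj'⟩ := hadj j hj istar hist
        have hc : ∃ i ∈ F, G.edist istar i ≤ 4 := hcov istar histar
        rw [hg] at hgi
        simp only [dif_pos hc] at hgi
        obtain ⟨hmem, hdist⟩ := hc.choose_spec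
        rw [hgi] at hmem hdist
        refine ⟨hmem, ?_⟩
        calc G.edist j i ≤ G.edist j istar + G.edist istar i := G.edist_triangle
          _ ≤ 1 + 4 := by
              gcongr
              exact le_of_eq (SimpleGraph.edist_eq_one_iff_adj.mpr hadj')
          _ = 5 := by norm_num
    · intro i hi
      refine le_trans (hL i (hFsub hi)) (Finset.card_le_card ?_)
      intro j hj
      rw [SimpleGraph.mem_neighborFinset] at hj
      have hjD : j ∈ 𝓓 := by
        rcases hbip i j hj with ⟨hiD, _⟩ | ⟨_, hjD⟩
        · exact absurd (hFsub hi) (Finset.disjoint_left.mp hdisj hiD)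
        · exact hjD
      have h : ∃ i' ∈ F, G.Adj j i' := ⟨i, hi, hj.symm⟩
      obtain ⟨hmem, hadj'⟩ := h.choose_spec
      have heq : h.choose = i := by
        by_contra hne
        refine hne4 (le_trans (hsep h.choose hmem i hi hne) ?_)
        calc G.edist h.choose i ≤ G.edist h.choose j + G.edist j i := G.edist_triangle
          _ ≤ 1 + 1 := by
              gcongr
              · rw [SimpleGraph.edist_comm]
                exact le_of_eq (SimpleGraph.edist_eq_one_iff_adj.mpr hadj')
              · exact le_of_eq (SimpleGraph.edist_eq_one_iff_adj.mpr hj.symm)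
          _ ≤ 4 := by norm_num
      rw [Finset.mem_filter]
      refine ⟨hjD, ?_⟩
      rw [hσ]
      simp only [dif_pos h, heq]
    · refine le_trans (Finset.card_le_card ?_) hout
      intro j hj
      rw [Finset.mem_filter] at hj ⊢
      refine ⟨hj.1, ?_⟩
      have := hj.2
      rw [hσ] at this
      simp only at this
      by_cases h : ∃ i ∈ F, G.Adj j i
      · simp [dif_pos h] at this
      · rw [dif_neg h] at this
        exact Option.map_eq_none_iff.mp this
end

section
/- Let U be a finite nonempty set, let S₁, …, S_{n'} be subsets of U, and let k ∈ ℕ. Define distances c(q, j) := 1 if j ∈ S_q and c(q, j) := 3 otherwise, for q ∈ {1,…,n'} and j ∈ U, and lower bounds L_q := 1 for every q. Then there exists I ⊆ {1,…,n'} with |I| ≤ k and ∪_{q∈I} S_q = U if and only if there exist S ⊆ {1,…,n'} and σ : U → S with |S| ≤ k, |σ⁻¹(q)| ≥ 1 for every q ∈ S, and c(σ(j), j) ≤ 1 for every j ∈ U. Consequently, if no k of the sets S₁, …, S_{n'} cover U, then every S ⊆ {1,…,n'} with |S| ≤ k and every σ : U → S with |σ⁻¹(q)| ≥ 1 for all q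 ∈ S satisfies max_{j∈U} c(σ(j), j) ≥ 3. -/
/-- Correctness of the set-cover reduction in Theorem 3.5 of the paper
(NP-hardness of approximating lower-bounded `k`-supplier within a factor
better than 3).  The distance from facility `q` (the set `S q`) to client `j`
is `1` if `j ∈ S q` and `3` otherwise, and all lower bounds equal `1`:
`U` is coverable by `k` of the sets iff the LBkSup instance has a solution of
maximum radius at most `1`, and otherwise every feasible solution has a client
at distance at least `3` from its center. -/
theorem stmt_12 {α : Type*} [DecidableEq α]
    (U : Finset α) (hU : U.Nonempty) (n' : ℕ)
    (S : Fin n' → Finset α) (hS : ∀ q, S q ⊆ U) (k : ℕ) :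
    ((∃ I : Finset (Fin n'), I.card ≤ k ∧ ∀ j ∈ U, ∃ q ∈ I, j ∈ S q) ↔
      (∃ (sel : Finset (Fin n')) (σ : α → Fin n'),
        sel.card ≤ k ∧
        (∀ j ∈ U, σ j ∈ sel) ∧
        (∀ q ∈ sel, ∃ j ∈ U, σ j = q) ∧
        (∀ j ∈ U, (if j ∈ S (σ j) then (1 : ℝ) else 3) ≤ 1))) ∧
    ((¬ ∃ I : Finset (Fin n'), I.card ≤ k ∧ ∀ j ∈ U, ∃ q ∈ I, j ∈ S q) →
      ∀ (sel : Finset (Fin n')) (σ : α → Fin n'),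
        sel.card ≤ k →
        (∀ j ∈ U, σ j ∈ sel) →
        (∀ q ∈ sel, ∃ j ∈ U, σ j = q) →
        ∃ j ∈ U, (3 : ℝ) ≤ if j ∈ S (σ j) then (1 : ℝ) else 3) := by
  have key : ∀ sel : Finset (Fin n'), ∀ σ : α → Fin n',
      (∀ j ∈ U, σ j ∈ sel) → (∀ j ∈ U, j ∈ S (σ j)) →
      ∀ j ∈ U, ∃ q ∈ sel, j ∈ S q := by
    intro sel σ h1 h2 j hj
    exact ⟨σ j, h1 j hj, h2 j hj⟩
  constructor
  · constructor
    · rintro ⟨I, hIk, hIcov⟩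
      classical
      obtain ⟨j₀, hj₀⟩ := hU
      obtain ⟨q₀, -, -⟩ := hIcov j₀ hj₀
      set σ : α → Fin n' := fun j =>
        if h : ∃ q ∈ I, j ∈ S q then h.choose else q₀ with hσ
      have hmem : ∀ j ∈ U, σ j ∈ I ∧ j ∈ S (σ j) := by
        intro j hj
        have h : ∃ q ∈ I, j ∈ S q := hIcov j hj
        simp only [hσ, dif_pos h]
        exact ⟨h.choose_spec.1, h.choose_spec.2⟩
      refine ⟨U.image σ, σ, ?_, ?_, ?_, ?_⟩
      · calc (U.image σ).card ≤ I.card := Finset.card_le_card (by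
            intro q hq
            obtain ⟨j, hj, rfl⟩ := Finset.mem_image.mp hq
            exact (hmem j hj).1)
          _ ≤ k := hIk
      · intro j hj; exact Finset.mem_image_of_mem σ hj
      · intro q hq
        obtain ⟨j, hj, rfl⟩ := Finset.mem_image.mp hq
        exact ⟨j, hj, rfl⟩
      · intro j hj
        rw [if_pos (hmem j hj).2]
    · rintro ⟨sel, σ, hk, h1, _, h3⟩
      refine ⟨sel, hk, key sel σ h1 ?_⟩
      intro j hj
      by_contra h
      have := h3 j hj
      rw [if_neg h] at this
      linarith
  · intro hno sel σ hk h1 h2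
    by_contra h
    push_neg at h
    apply hno
    refine ⟨sel, hk, key sel σ h1 ?_⟩
    intro j hj
    by_contra hj'
    have := h j hj
    rw [if_neg hj'] at this
    linarith
end

section
/- Let (F*, σ*) be a feasible LBkSupO-solution with maximum radius R. Let N := |𝓕| + 1 and 𝓓' := (𝓓 × {1,…,N}) ∪ 𝓕. Then there exists σ̂ : 𝓓' → F* ∪ {out} such that |σ̂⁻¹(i)| ≥ N·L_i for every i ∈ F*, |σ̂⁻¹(out)| ≤ N·m + N − 1, every element of 𝓕 ⊆ 𝓓' is mapped to out, and c(j, i) ≤ R whenever σ̂((j, p)) = i ∈ F* for a copy (j, p) ∈ 𝓓 × {1,…,N}. In particular, the derived lower-bounded k-center instance on client set 𝓓' (with lower bounds N·L_i on facilities i ∈ 𝓕 and outlier bound N·m + N − 1) has a feasible solution of maximum radius at most R. -/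
/-- One direction of the equivalence in Appendix C of the paper between
lower-bounded `k`-supplier with outliers and lower-bounded `k`-center with
outliers: a feasible LBkSupO-solution `(F*, σ*)` of maximum radius `R` yields
a feasible solution of maximum radius at most `R` to the derived
lower-bounded `k`-center instance, whose client set `𝓓'` consists of
`N = |𝓕| + 1` copies of each client together with the facilities, with lower
bounds `N·L_i` and outlier bound `N·m + N − 1`; moreover all the facility
elements of `𝓓'` are designated outliers. -/
theorem stmt_14 {X : Type*} [MetricSpace X] [DecidableEq X]
    (𝓕 𝓓 : Finset X) (L : X → ℕ) (k m : ℕ) (R : ℝ)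
    (Fstar : Finset X) (σstar : X → Option X)
    (hFsub : Fstar ⊆ 𝓕) (hFcard : Fstar.card ≤ k)
    (hassign : ∀ j ∈ 𝓓, ∀ i, σstar j = some i → i ∈ Fstar ∧ dist i j ≤ R)
    (hlb : ∀ i ∈ Fstar, L i ≤ (𝓓.filter fun j => σstar j = some i).card)
    (hout : (𝓓.filter fun j => σstar j = none).card ≤ m)
    (N : ℕ) (hN : N = 𝓕.card + 1)
    (D' : Finset ((X × ℕ) ⊕ X))
    (hD' : D' = ((𝓓 ×ˢ Finset.Icc 1 N).image Sum.inl) ∪ (𝓕.image Sum.inr)) :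
    ∃ σhat : (X × ℕ) ⊕ X → Option X,
      (∀ d ∈ D', ∀ i, σhat d = some i → i ∈ Fstar) ∧
      (∀ i ∈ Fstar, N * L i ≤ (D'.filter fun d => σhat d = some i).card) ∧
      ((D'.filter fun d => σhat d = none).card ≤ N * m + N - 1) ∧
      (∀ i' ∈ 𝓕, σhat (Sum.inr i') = none) ∧
      (∀ j p i, Sum.inl (j, p) ∈ D' → σhat (Sum.inl (j, p)) = some i →
        dist j i ≤ R) := by
  classical
  subst hN
  refine ⟨fun d => Sum.elim (fun jp => σstar jp.1) (fun _ => none) d, ?_, ?_, ?_, ?_, ?_⟩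
  · intro d hd i hi
    subst hD'
    simp only [Finset.mem_union, Finset.mem_image, Finset.mem_product] at hd
    rcases hd with ⟨⟨j, p⟩, ⟨hj, _⟩, rfl⟩ | ⟨x, _, rfl⟩
    · exact (hassign j hj i hi).1
    · simp at hi
  · intro i hi
    subst hD'
    have hfilter :
        ((((𝓓 ×ˢ Finset.Icc 1 (𝓕.card + 1)).image Sum.inl) ∪ (𝓕.image Sum.inr)).filter
          fun d => Sum.elim (fun jp : X × ℕ => σstar jp.1) (fun _ => none) d = some i)
        = (((𝓓.filter fun j => σstar j = some i) ×ˢ Finset.Icc 1 (𝓕.card + 1)).image Sum.inl) := by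
      ext d
      rcases d with ⟨j, p⟩ | x <;>
        simp [Finset.mem_filter, Finset.mem_product, and_assoc, and_comm, and_left_comm]
    rw [hfilter, Finset.card_image_of_injective _ Sum.inl_injective, Finset.card_product,
      Nat.card_Icc]
    simp only [Nat.add_sub_cancel]
    calc (𝓕.card + 1) * L i ≤ (𝓕.card + 1) * (𝓓.filter fun j => σstar j = some i).card :=
          Nat.mul_le_mul_left (𝓕.card + 1) (hlb i hi)
      _ = _ := Nat.mul_comm _ _
  · subst hD'
    have hfilter :
        ((((𝓓 ×ˢ Finset.Icc 1 (𝓕.card + 1)).image Sum.inl) ∪ (𝓕.image Sum.inr)).filter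
          fun d => Sum.elim (fun jp : X × ℕ => σstar jp.1) (fun _ => none) d = none)
        = (((𝓓.filter fun j => σstar j = none) ×ˢ Finset.Icc 1 (𝓕.card + 1)).image Sum.inl)
            ∪ (𝓕.image Sum.inr) := by
      ext d
      rcases d with ⟨j, p⟩ | x <;>
        simp [Finset.mem_filter, Finset.mem_product, and_assoc, and_comm, and_left_comm]
    rw [hfilter, Finset.card_union_of_disjoint, Finset.card_image_of_injective _ Sum.inl_injective,
      Finset.card_image_of_injective _ Sum.inr_injective, Finset.card_product, Nat.card_Icc]
    · simp only [Nat.add_sub_cancel]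
      have h1 : (𝓓.filter fun j => σstar j = none).card * (𝓕.card + 1) ≤ m * (𝓕.card + 1) :=
        Nat.mul_le_mul_right (𝓕.card + 1) hout
      calc (𝓓.filter fun j => σstar j = none).card * (𝓕.card + 1) + 𝓕.card
          ≤ m * (𝓕.card + 1) + 𝓕.card := Nat.add_le_add_right h1 _
        _ = (𝓕.card + 1) * m + (𝓕.card + 1) - 1 := by rw [Nat.mul_comm]; omega
    · simp [Finset.disjoint_left]
  · intro i' _; rfl
  · intro j p i hmem hi
    subst hD'
    simp only [Finset.mem_union, Finset.mem_image, Finset.mem_product] at hmem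
    rcases hmem with ⟨⟨j', p'⟩, ⟨hj, _⟩, heq⟩ | ⟨x, _, heq⟩
    · simp only [Sum.inl.injEq, Prod.mk.injEq] at heq
      obtain ⟨rfl, rfl⟩ := heq
      rw [dist_comm]
      exact (hassign _ hj i hi).2
    · simp at heq
end

section
/- Let N := |𝓕| + 1 and 𝓓' := (𝓓 × {1,…,N}) ∪ 𝓕. Suppose F̂ ⊆ 𝓕 with |F̂| ≤ k and σ̂ : 𝓓' → F̂ ∪ {out} satisfy |σ̂⁻¹(i)| ≥ N·L_i for every i ∈ F̂, |σ̂⁻¹(out)| ≤ N·m + N − 1, and c(j, i) ≤ R whenever σ̂((j, p)) = i ∈ F̂ for a copy (j, p) ∈ 𝓓 × {1,…,N}. Then there exists σ' : 𝓓 → F̂ ∪ {out} with |σ'⁻¹(i)| ≥ L_i for every i ∈ F̂, |σ'⁻¹(out)| ≤ m, and c(σ'(j), j) ≤ R whenever σ'(j) ≠ out; that is, (F̂, σ') is a feasible LBkSupO-solution with maximum radius at most R. -/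
/-- The converse direction of the equivalence in Appendix C of the paper: a
feasible solution `(F̂, σ̂)` of maximum radius `R` to the derived lower-bounded
`k`-center instance — client set `𝓓'` consisting of `N = |𝓕| + 1` copies of
each client together with the facilities, lower bounds `N·L_i`, outlier bound
`N·m + N − 1` — can be transformed into a feasible LBkSupO-solution of maximum
radius at most `R` with the same centers. -/
theorem stmt_15 {X : Type*} [MetricSpace X] [DecidableEq X]
    (𝓕 𝓓 : Finset X) (L : X → ℕ) (k m : ℕ) (R : ℝ)
    (N : ℕ) (hN : N = 𝓕.card + 1)
    (D' : Finset ((X × ℕ) ⊕ X))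
    (hD' : D' = ((𝓓 ×ˢ Finset.Icc 1 N).image Sum.inl) ∪ (𝓕.image Sum.inr))
    (Fhat : Finset X) (hFsub : Fhat ⊆ 𝓕) (hFcard : Fhat.card ≤ k)
    (σhat : (X × ℕ) ⊕ X → Option X)
    (hrange : ∀ d ∈ D', ∀ i, σhat d = some i → i ∈ Fhat)
    (hlb : ∀ i ∈ Fhat, N * L i ≤ (D'.filter fun d => σhat d = some i).card)
    (hout : (D'.filter fun d => σhat d = none).card ≤ N * m + N - 1)
    (hrad : ∀ j p i, Sum.inl (j, p) ∈ D' → σhat (Sum.inl (j, p)) = some i →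
      dist j i ≤ R) :
    ∃ σ' : X → Option X,
      (∀ j ∈ 𝓓, ∀ i, σ' j = some i → i ∈ Fhat ∧ dist i j ≤ R) ∧
      (∀ i ∈ Fhat, L i ≤ (𝓓.filter fun j => σ' j = some i).card) ∧
      (𝓓.filter fun j => σ' j = none).card ≤ m := by
  classical
  have hN1 : 1 ≤ N := by omega
  -- membership of copies in D'
  have hmemD' : ∀ j p, j ∈ 𝓓 → p ∈ Finset.Icc 1 N → Sum.inl (j, p) ∈ D' := by
    intro j p hj hp
    rw [hD']
    exact Finset.mem_union_left _
      (Finset.mem_image_of_mem _ (Finset.mem_product.mpr ⟨hj, hp⟩))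
  -- the set of clients touching a center i
  set touch : X → Finset X := fun i =>
    𝓓.filter (fun j => ∃ p ∈ Finset.Icc 1 N, σhat (Sum.inl (j, p)) = some i)
    with htouchdef
  -- a client in `touch i` (with i ∈ Fhat) is within distance R of i
  have htouchR : ∀ i ∈ Fhat, ∀ j ∈ touch i, dist i j ≤ R := by
    intro i hi j hj
    simp only [htouchdef, Finset.mem_filter] at hj
    obtain ⟨hj𝓓, p, hp, hσ⟩ := hj
    have := hrad j p i (hmemD' j p hj𝓓 hp) hσ
    rwa [dist_comm]
  have htouchD : ∀ i, touch i ⊆ 𝓓 := by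
    intro i j hj
    simp only [htouchdef, Finset.mem_filter] at hj
    exact hj.1
  -- key counting: for T ⊆ Fhat, ∑_{i ∈ T} L i ≤ |⋃_{i∈T} touch i|
  have keyB : ∀ T : Finset X, T ⊆ Fhat → ∑ i ∈ T, L i ≤ (T.biUnion touch).card := by
    intro T hT
    rcases T.eq_empty_or_nonempty with rfl | ⟨x0, hx0⟩
    · simp
    set B := T.biUnion touch with hB
    set S := D'.filter (fun d => ∃ i ∈ T, σhat d = some i) with hS
    -- S.card is the sum of the fibers
    have hsum : S.card = ∑ i ∈ T, (D'.filter fun d => σhat d = some i).card := by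
      have hmap : ∀ d ∈ S, (σhat d).getD x0 ∈ T := by
        intro d hd
        rw [hS, Finset.mem_filter] at hd
        obtain ⟨-, i, hiT, hi⟩ := hd
        rw [hi]; exact hiT
      rw [Finset.card_eq_sum_card_fiberwise hmap]
      refine Finset.sum_congr rfl ?_
      intro i hiT
      congr 1
      ext d
      simp only [hS, Finset.mem_filter]
      constructor
      · rintro ⟨⟨hd, i', hi'T, hi'⟩, hgd⟩
        refine ⟨hd, ?_⟩
        rw [hi'] at hgd ⊢
        simpa using congrArg some hgd
      · rintro ⟨hd, hsome⟩
        exact ⟨⟨hd, i, hiT, hsome⟩, by rw [hsome]; rfl⟩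
    have h1 : N * ∑ i ∈ T, L i ≤ S.card := by
      rw [hsum, Finset.mul_sum]
      exact Finset.sum_le_sum fun i hi => hlb i (hT hi)
    -- bound S.card from above
    have h2sub : S ⊆ ((B ×ˢ Finset.Icc 1 N).image Sum.inl) ∪ (𝓕.image Sum.inr) := by
      intro d hd
      rw [hS, Finset.mem_filter] at hd
      obtain ⟨hdD, i, hiT, hsome⟩ := hd
      rw [hD', Finset.mem_union] at hdD
      rcases hdD with hdl | hdr
      · obtain ⟨⟨j, p⟩, hjp, rfl⟩ := Finset.mem_image.mp hdl
        obtain ⟨hj, hp⟩ := Finset.mem_product.mp hjp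
        have hjt : j ∈ touch i := by
          simp only [htouchdef, Finset.mem_filter]
          exact ⟨hj, p, hp, hsome⟩
        have hjB : j ∈ B := Finset.mem_biUnion.mpr ⟨i, hiT, hjt⟩
        exact Finset.mem_union_left _
          (Finset.mem_image_of_mem _ (Finset.mem_product.mpr ⟨hjB, hp⟩))
      · exact Finset.mem_union_right _ hdr
    have h2 : S.card ≤ B.card * N + 𝓕.card := by
      calc S.card ≤ (((B ×ˢ Finset.Icc 1 N).image Sum.inl) ∪ (𝓕.image Sum.inr)).card :=
            Finset.card_le_card h2sub
        _ ≤ ((B ×ˢ Finset.Icc 1 N).image Sum.inl).card + (𝓕.image Sum.inr).card :=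
            Finset.card_union_le _ _
        _ = B.card * N + 𝓕.card := by
            rw [Finset.card_image_of_injective _ Sum.inl_injective,
              Finset.card_image_of_injective _ Sum.inr_injective,
              Finset.card_product, Nat.card_Icc]
            simp
    -- combine
    by_contra hcon
    push_neg at hcon
    have h3 : N * (B.card + 1) ≤ N * ∑ i ∈ T, L i :=
      Nat.mul_le_mul_left _ (by omega)
    have h4 : B.card * N + N ≤ B.card * N + 𝓕.card := by
      calc B.card * N + N = N * (B.card + 1) := by ring
        _ ≤ N * ∑ i ∈ T, L i := h3
        _ ≤ S.card := h1
        _ ≤ B.card * N + 𝓕.card := h2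
    have h5 : N ≤ 𝓕.card := Nat.le_of_add_le_add_left h4
    omega
  -- Hall's theorem on slots
  have hall : ∀ s : Finset ((i : {x // x ∈ Fhat}) × Fin (L i.1)),
      s.card ≤ (s.biUnion (fun x => touch x.1.1)).card := by
    intro s
    set T := s.image (fun x : (i : {x // x ∈ Fhat}) × Fin (L i.1) => (x.1 : X)) with hTdef
    have hTF : T ⊆ Fhat := by
      intro i hi
      rw [hTdef, Finset.mem_image] at hi
      obtain ⟨x, -, rfl⟩ := hi
      exact x.1.2
    have hbU : s.biUnion (fun x => touch x.1.1) = T.biUnion touch := by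
      ext a
      simp only [Finset.mem_biUnion, hTdef, Finset.mem_image]
      constructor
      · rintro ⟨x, hx, ha⟩
        exact ⟨(x.1 : X), ⟨x, hx, rfl⟩, ha⟩
      · rintro ⟨i, ⟨x, hx, rfl⟩, ha⟩
        exact ⟨x, hx, ha⟩
    have stepA : s.card ≤ ∑ i ∈ T, L i := by
      have hmap : ∀ x ∈ s, (x.1 : X) ∈ T := fun x hx => Finset.mem_image_of_mem _ hx
      rw [Finset.card_eq_sum_card_fiberwise hmap]
      refine Finset.sum_le_sum ?_
      intro i hi
      have hle : (Finset.filter (fun x => (x.1 : X) = i) s).card ≤ (Finset.range (L i)).card := by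
        apply Finset.card_le_card_of_injOn (fun x => (x.2 : ℕ))
        · intro x hx
          rw [Finset.mem_coe, Finset.mem_filter] at hx
          rw [Finset.mem_coe]
          exact Finset.mem_range.mpr (hx.2 ▸ x.2.isLt)
        · intro x hx y hy hxy
          simp only [Finset.mem_coe, Finset.mem_filter] at hx hy
          obtain ⟨⟨xi, hxi⟩, xq⟩ := x
          obtain ⟨⟨yi, hyi⟩, yq⟩ := y
          have hx2 : xi = i := hx.2
          have hy2 : yi = i := hy.2
          subst hx2; subst hy2
          exact congrArg _ (Fin.ext hxy)
      simpa using hle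
    calc s.card ≤ ∑ i ∈ T, L i := stepA
      _ ≤ (T.biUnion touch).card := keyB T hTF
      _ = (s.biUnion (fun x => touch x.1.1)).card := by rw [hbU]
  obtain ⟨f, hfinj, hfmem⟩ :=
    (Finset.all_card_le_biUnion_card_iff_exists_injective
      (fun s : (i : {x // x ∈ Fhat}) × Fin (L i.1) => touch s.1.1)).mp hall
  -- define σ'
  set σ' : X → Option X := fun j =>
    if h : ∃ s : (i : {x // x ∈ Fhat}) × Fin (L i.1), f s = j then some ((h.choose.1 : X))
    else if h2 : ∃ i ∈ Fhat, j ∈ touch i then some h2.choose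
    else none with hσ'def
  refine ⟨σ', ?_, ?_, ?_⟩
  · -- range and radius
    intro j hj i hi
    by_cases h : ∃ s : (i : {x // x ∈ Fhat}) × Fin (L i.1), f s = j
    · rw [hσ'def] at hi
      simp only [dif_pos h] at hi
      obtain rfl : (h.choose.1 : X) = i := Option.some.inj hi
      refine ⟨h.choose.1.2, ?_⟩
      have hjt : j ∈ touch (h.choose.1 : X) := by
        have := hfmem h.choose
        rwa [h.choose_spec] at this
      exact htouchR _ h.choose.1.2 j hjt
    · rw [hσ'def] at hi
      simp only [dif_neg h] at hi
      by_cases h2 : ∃ i ∈ Fhat, j ∈ touch i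
      · simp only [dif_pos h2] at hi
        obtain rfl : h2.choose = i := Option.some.inj hi
        obtain ⟨hiF, hjt⟩ := h2.choose_spec
        exact ⟨hiF, htouchR _ hiF j hjt⟩
      · simp only [dif_neg h2] at hi
        exact absurd hi (by simp)
  · -- lower bounds
    intro i hiF
    have hmem : ∀ q : Fin (L i), f ⟨⟨i, hiF⟩, q⟩ ∈ 𝓓.filter (fun j => σ' j = some i) := by
      intro q
      set s : (i : {x // x ∈ Fhat}) × Fin (L i.1) := ⟨⟨i, hiF⟩, q⟩ with hs
      have hfs : f s ∈ touch i := hfmem s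
      rw [Finset.mem_filter]
      refine ⟨htouchD i hfs, ?_⟩
      have h : ∃ s' : (i : {x // x ∈ Fhat}) × Fin (L i.1), f s' = f s := ⟨s, rfl⟩
      have hcs : h.choose = s := hfinj h.choose_spec
      rw [hσ'def]
      simp only [dif_pos h]
      rw [hcs]
    have hinj : Set.InjOn (fun q : Fin (L i) => f ⟨⟨i, hiF⟩, q⟩)
        (Finset.univ : Finset (Fin (L i))) := by
      intro a _ b _ hab
      have := hfinj hab
      simpa using this
    calc L i = (Finset.univ : Finset (Fin (L i))).card := by simp
      _ ≤ (𝓓.filter (fun j => σ' j = some i)).card :=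
        Finset.card_le_card_of_injOn _ (fun q _ => hmem q) hinj
  · -- outliers
    set Out := 𝓓.filter (fun j => σ' j = none) with hOutdef
    have hsub : (Out ×ˢ Finset.Icc 1 N).image Sum.inl ⊆
        D'.filter (fun d => σhat d = none) := by
      intro d hd
      obtain ⟨⟨j, p⟩, hjp, rfl⟩ := Finset.mem_image.mp hd
      obtain ⟨hjOut, hp⟩ := Finset.mem_product.mp hjp
      rw [hOutdef, Finset.mem_filter] at hjOut
      obtain ⟨hj𝓓, hjnone⟩ := hjOut
      have hmem := hmemD' j p hj𝓓 hp
      rw [Finset.mem_filter]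
      refine ⟨hmem, ?_⟩
      by_contra hne
      obtain ⟨i, hi⟩ := Option.ne_none_iff_exists'.mp hne
      have hiF := hrange _ hmem i hi
      have hjt : j ∈ touch i := by
        simp only [htouchdef, Finset.mem_filter]
        exact ⟨hj𝓓, p, hp, hi⟩
      have h2 : ∃ i ∈ Fhat, j ∈ touch i := ⟨i, hiF, hjt⟩
      rw [hσ'def] at hjnone
      by_cases h1 : ∃ s : (i : {x // x ∈ Fhat}) × Fin (L i.1), f s = j
      · simp only [dif_pos h1] at hjnone
        exact absurd hjnone (by simp)
      · simp only [dif_neg h1, dif_pos h2] at hjnone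
        exact absurd hjnone (by simp)
    have hcard : Out.card * N ≤ N * m + N - 1 := by
      have h1 : ((Out ×ˢ Finset.Icc 1 N).image
          (Sum.inl : X × ℕ → (X × ℕ) ⊕ X)).card = Out.card * N := by
        rw [Finset.card_image_of_injective _ Sum.inl_injective,
          Finset.card_product, Nat.card_Icc]
        simp
      calc Out.card * N = _ := h1.symm
        _ ≤ (D'.filter (fun d => σhat d = none)).card := Finset.card_le_card hsub
        _ ≤ N * m + N - 1 := hout
    by_contra hcon
    push_neg at hcon
    have h3 : N * (m + 1) ≤ Out.card * N := by
      calc N * (m + 1) = (m + 1) * N := by ring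
        _ ≤ Out.card * N := Nat.mul_le_mul_right _ (by omega)
    have h4 : N * m + N ≤ N * m + N - 1 := by
      calc N * m + N = N * (m + 1) := by ring
        _ ≤ Out.card * N := h3
        _ ≤ N * m + N - 1 := hcard
    have h5 : N * m + N - 1 < N * m + N :=
      Nat.sub_lt (Nat.add_pos_right _ (by omega)) one_pos
    exact absurd (lt_of_le_of_lt h4 h5) (lt_irrefl _)
end

section
/- Let D' be a finite set, α : D' → ℝ≥0, and let γ, z₁, OPT, ε, θ be nonnegative reals and k', m ∈ ℕ satisfy (m + |D'|)·θ ≤ ε·OPT and Σ_{j∈D'} α_j − k'·z₁ − m·γ ≤ OPT. Let I be a finite index set and for each i ∈ I let r'_i ≥ 0 and B_i ⊆ D' be given, with the sets B_i nonempty and pairwise disjoint, and with Σ_{j∈B_i} α_j ≥ r'_i + z₁ − θ for every i ∈ I. Let Out ⊆ D' have |Out| = m, be disjoint from every B_i, and satisfy α_j ≥ γ − θ for all j ∈ Out. Then Σ_{i∈I} r'_i + |I|·z₁ ≤ (1 + ε)·OPT + k'·z₁. In particular, if |I| ≥ k' then Σ_{i∈I} r'_i ≤ (1 + ε)·OPT,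 and if |I| > k' then z₁ ≤ (1 + ε)·OPT. -/
/-- Abstract form of Lemma 2.11 of the paper: if `α` is a dual solution of
value at most `OPT`, the pairs `(i, r'_i)` are almost-tight (slack `θ`) with
pairwise-disjoint nonempty balls `B i ⊆ D'`, and `Out` is a set of `m` clients
outside all the balls with dual values at least `γ − θ`, then
`Σ r'_i + |I|·z₁ ≤ (1+ε)·OPT + k'·z₁`; in particular `Σ r'_i ≤ (1+ε)·OPT` if
`|I| ≥ k'`, and `z₁ ≤ (1+ε)·OPT` if `|I| > k'`. -/
theorem stmt_16 {δ ι : Type*} [DecidableEq δ]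
    (D' : Finset δ) (α : δ → ℝ) (hα : ∀ j ∈ D', 0 ≤ α j)
    (γ z₁ OPT ε θ : ℝ) (k' m : ℕ)
    (hγ : 0 ≤ γ) (hz₁ : 0 ≤ z₁) (hOPT : 0 ≤ OPT) (hε : 0 ≤ ε) (hθ : 0 ≤ θ)
    (hθOPT : ((m : ℝ) + (D'.card : ℝ)) * θ ≤ ε * OPT)
    (hdual : (∑ j ∈ D', α j) - (k' : ℝ) * z₁ - (m : ℝ) * γ ≤ OPT)
    (I : Finset ι) (r' : ι → ℝ) (B : ι → Finset δ)
    (hr' : ∀ i ∈ I, 0 ≤ r' i)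
    (hBD : ∀ i ∈ I, B i ⊆ D')
    (hBne : ∀ i ∈ I, (B i).Nonempty)
    (hBdisj : ∀ i ∈ I, ∀ i' ∈ I, i ≠ i' → Disjoint (B i) (B i'))
    (htight : ∀ i ∈ I, r' i + z₁ - θ ≤ ∑ j ∈ B i, α j)
    (Out : Finset δ) (hOutD : Out ⊆ D') (hOutcard : Out.card = m)
    (hOutdisj : ∀ i ∈ I, Disjoint Out (B i))
    (hOutα : ∀ j ∈ Out, γ - θ ≤ α j) :
    ((∑ i ∈ I, r' i) + (I.card : ℝ) * z₁ ≤ (1 + ε) * OPT + (k' : ℝ) * z₁) ∧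
    (k' ≤ I.card → ∑ i ∈ I, r' i ≤ (1 + ε) * OPT) ∧
    (k' < I.card → z₁ ≤ (1 + ε) * OPT) := by
  classical
  set U : Finset δ := I.biUnion B with hU
  have hdisjU : Disjoint Out U := by
    simp only [hU, Finset.disjoint_biUnion_right]
    exact hOutdisj
  have hUD : U ⊆ D' := by
    intro j hj
    rcases Finset.mem_biUnion.1 hj with ⟨i, hi, hji⟩
    exact hBD i hi hji
  have hsumU : ∑ j ∈ U, α j = ∑ i ∈ I, ∑ j ∈ B i, α j :=
    Finset.sum_biUnion (fun i hi i' hi' h => hBdisj i hi i' hi' h)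
  have hsub : Out ∪ U ⊆ D' := Finset.union_subset hOutD hUD
  have hsplit : ∑ j ∈ Out ∪ U, α j = ∑ j ∈ Out, α j + ∑ j ∈ U, α j :=
    Finset.sum_union hdisjU
  have hle : ∑ j ∈ Out ∪ U, α j ≤ ∑ j ∈ D', α j :=
    Finset.sum_le_sum_of_subset_of_nonneg hsub (fun j hj _ => hα j hj)
  have hOutsum : (m : ℝ) * (γ - θ) ≤ ∑ j ∈ Out, α j := by
    calc (m : ℝ) * (γ - θ) = ∑ _j ∈ Out, (γ - θ) := by
          rw [Finset.sum_const, hOutcard, nsmul_eq_mul]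
      _ ≤ ∑ j ∈ Out, α j := Finset.sum_le_sum hOutα
  have hIsum : ∑ i ∈ I, (r' i + z₁ - θ) ≤ ∑ j ∈ U, α j := by
    rw [hsumU]; exact Finset.sum_le_sum htight
  have hIcard : (I.card : ℝ) ≤ (D'.card : ℝ) := by
    have h1 : I.card ≤ U.card := by
      rw [hU, Finset.card_biUnion (fun i hi i' hi' h => hBdisj i hi i' hi' h)]
      calc I.card = ∑ _i ∈ I, 1 := by simp
        _ ≤ ∑ i ∈ I, (B i).card :=
          Finset.sum_le_sum (fun i hi => Finset.card_pos.2 (hBne i hi))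
    exact_mod_cast h1.trans (Finset.card_le_card hUD)
  have hIsum' : ∑ i ∈ I, (r' i + z₁ - θ) =
      (∑ i ∈ I, r' i) + (I.card : ℝ) * z₁ - (I.card : ℝ) * θ := by
    rw [Finset.sum_sub_distrib, Finset.sum_add_distrib]
    simp [mul_comm]
  have key : (∑ i ∈ I, r' i) + (I.card : ℝ) * z₁ ≤ (1 + ε) * OPT + (k' : ℝ) * z₁ := by
    have h1 : (∑ i ∈ I, r' i) + (I.card : ℝ) * z₁ - (I.card : ℝ) * θ + (m : ℝ) * (γ - θ)
        ≤ ∑ j ∈ D', α j := by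
      rw [← hIsum']
      calc ∑ i ∈ I, (r' i + z₁ - θ) + (m : ℝ) * (γ - θ)
          ≤ ∑ j ∈ U, α j + ∑ j ∈ Out, α j := add_le_add hIsum hOutsum
        _ = ∑ j ∈ Out ∪ U, α j := by rw [hsplit]; ring
        _ ≤ ∑ j ∈ D', α j := hle
    have h2 : ((I.card : ℝ) + m) * θ ≤ ε * OPT := by
      refine le_trans ?_ hθOPT
      have : (0:ℝ) ≤ θ := hθ
      nlinarith
    nlinarith [hdual]
  refine ⟨key, ?_, ?_⟩
  · intro h
    have h' : (k' : ℝ) ≤ (I.card : ℝ) := by exact_mod_cast h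
    nlinarith
  · intro h
    have h' : (k' : ℝ) + 1 ≤ (I.card : ℝ) := by exact_mod_cast h
    have hr := Finset.sum_nonneg hr'
    nlinarith
end
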